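/- arXiv:math/0605159 — 6 statements merged into one kernel-verified Lean document; each statement's English description precedes it below -/
import Mathlib

section
/- Let a ≥ 1/2 be real. Define φ : (0,1) → ℝ by φ(u) = [Γ(2a)Γ(6a−1)/(Γ(4a)Γ(4a−1))] · u^a · Σ_{n=0}^∞ [(2a)_n (1−2a)_n / ((4a)_n n!)] u^n. Then: (i) for every u ∈ (0,1) the series converges; (ii) φ satisfies the ordinary differential equation u²(1−u)²φ''(u) + 2u(a − u + (1−a)u²)φ'(u) − a(3a−1)(1−u)²φ(u) = 0 on (0,1); and (iii) φ(u) → 0 as u → 0+ and φ(u) → 1 as u → 1−. -/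
open Set Filter Polynomial Topology

-- Pochhammer facts
lemma asc_succ_eval (n : ℕ) (x : ℝ) :
    (ascPochhammer ℝ (n+1)).eval x = (ascPochhammer ℝ n).eval x * (x + n) :=
  ascPochhammer_succ_eval n x

lemma asc_mono {x y : ℝ} (hx : 0 < x) (hxy : x ≤ y) (n : ℕ) :
    (ascPochhammer ℝ n).eval x ≤ (ascPochhammer ℝ n).eval y := by
  induction n with
  | zero => simp
  | succ n ih =>
    rw [asc_succ_eval, asc_succ_eval]
    have h1 : 0 < (ascPochhammer ℝ n).eval x := ascPochhammer_pos n x hx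
    have h2 : (0:ℝ) < x + n := by positivity
    nlinarith [ih]

lemma abs_asc_neg {b : ℝ} (hb : 0 ≤ b) (n : ℕ) :
    |(ascPochhammer ℝ n).eval (-b)| ≤ (ascPochhammer ℝ n).eval b := by
  induction n with
  | zero => simp
  | succ n ih =>
    rw [asc_succ_eval, asc_succ_eval, abs_mul]
    have h1 : |(-b) + n| ≤ b + n := by
      rw [abs_le]; have : (0:ℝ) ≤ (n:ℝ) := Nat.cast_nonneg n
      constructor <;> nlinarith
    have h2 : (0:ℝ) ≤ b + n := by positivity
    exact mul_le_mul ih h1 (abs_nonneg _) ((abs_nonneg _).trans ih)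

-- machinery
def Hgood (p : ℕ → ℝ) : Prop := ∀ r : ℝ, 0 ≤ r → r < 1 → Summable (fun n => |p n| * r^n)

lemma Hgood.mul_nat {p : ℕ → ℝ} (h : Hgood p) : Hgood (fun n => (n:ℝ) * p n) := by
  intro r hr0 hr1
  rcases eq_or_lt_of_le hr0 with h0 | h0
  · apply summable_of_ne_finset_zero (s := {0})
    intro n hn
    have hn' : n ≠ 0 := by simpa using hn
    simp [zero_pow hn', ← h0]
  · set r' := (r+1)/2 with hr'def
    have hr'0 : 0 < r' := by simp only [hr'def]; linarith
    have hr'1 : r' < 1 := by simp only [hr'def]; linarith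
    have hrr' : r < r' := by simp only [hr'def]; linarith
    have hq : |r/r'| < 1 := by
      rw [abs_of_nonneg (by positivity)]
      rw [div_lt_one hr'0]; exact hrr'
    have hb : Summable (fun n : ℕ => (n:ℝ)^1 * (r/r')^n) := by
      simpa using summable_pow_mul_geometric_of_norm_lt_one 1 (by rwa [norm_div, Real.norm_eq_abs, Real.norm_eq_abs, ← abs_div])
    have hbd : BddAbove (Set.range (fun n : ℕ => (n:ℝ) * (r/r')^n)) := by
      have := hb.tendsto_atTop_zero
      simp only [pow_one] at this
      exact this.bddAbove_range
    obtain ⟨C, hC⟩ := hbd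
    refine Summable.of_nonneg_of_le (fun n => by positivity) (fun n => ?_)
      (((h r' hr'0.le hr'1).mul_left C))
    have hCn : (n:ℝ) * (r/r')^n ≤ C := hC ⟨n, rfl⟩
    have key : |(n:ℝ) * p n| * r^n = ((n:ℝ) * (r/r')^n) * (|p n| * r'^n) := by
      rw [abs_mul, Nat.abs_cast]
      rw [div_pow]
      field_simp
    rw [key]
    apply mul_le_mul_of_nonneg_right hCn (by positivity)

lemma Hgood.summable_at {p : ℕ → ℝ} (h : Hgood p) {y : ℝ} (hy : |y| < 1) :
    Summable fun n => p n * y^n := by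
  apply Summable.of_abs
  have := h |y| (abs_nonneg y) hy
  refine this.congr fun n => ?_
  rw [abs_mul, abs_pow]
-- derivative machinery (appended to chunk1)
lemma Hgood.shift {p : ℕ → ℝ} (h : Hgood p) : Hgood (fun n : ℕ => ((n:ℝ)+1) * p (n+1)) := by
  intro r hr0 hr1
  rcases eq_or_lt_of_le hr0 with h0 | h0
  · apply summable_of_ne_finset_zero (s := {0})
    intro n hn
    have hn' : n ≠ 0 := by simpa using hn
    simp [zero_pow hn', ← h0]
  · have h1 := (h.mul_nat) r hr0 hr1
    have h2 : Summable (fun n : ℕ => |((n+1:ℕ):ℝ) * p (n+1)| * r^(n+1)) :=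
      (summable_nat_add_iff 1).2 h1
    have h3 := h2.mul_right r⁻¹
    refine h3.congr fun n => ?_
    push_cast
    rw [pow_succ]
    field_simp

lemma Hgood.hasDerivAt_tsum {p : ℕ → ℝ} (h : Hgood p) {y : ℝ} (hy : |y| < 1) :
    HasDerivAt (fun z => ∑' n, p n * z^n) (∑' n : ℕ, ((n:ℝ)+1) * p (n+1) * y^n) y := by
  set r := (|y|+1)/2 with hrdef
  have hy0 := abs_nonneg y
  have hr0 : 0 < r := by simp only [hrdef]; linarith
  have hr1 : r < 1 := by simp only [hrdef]; linarith
  have hyr : |y| < r := by simp only [hrdef]; linarith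
  -- summable bound
  have hu : Summable (fun n : ℕ => (n:ℝ) * |p n| * r^(n-1)) := by
    have h1 : Summable (fun n : ℕ => |(n:ℝ) * p n| * r^n) := h.mul_nat r hr0.le hr1
    have h2 := h1.mul_right r⁻¹
    refine h2.congr fun n => ?_
    cases n with
    | zero => simp
    | succ m =>
      rw [abs_mul, Nat.abs_cast, Nat.succ_sub_one, pow_succ]
      push_cast
      field_simp
  have key := hasDerivAt_tsum_of_isPreconnected hu (Metric.isOpen_ball (x := (0:ℝ)) (ε := r))
      ((convex_ball (0:ℝ) r).isPreconnected)
      (g := fun n z => p n * z^n) (g' := fun n z => p n * ((n:ℝ) * z^(n-1)))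
      (fun n z _ => (hasDerivAt_pow n z).const_mul (p n))
      (fun n z hz => by
        rw [Real.norm_eq_abs, abs_mul, abs_mul, Nat.abs_cast, abs_pow]
        have hz' : |z| ≤ r := by
          rw [Metric.mem_ball, dist_zero_right, Real.norm_eq_abs] at hz
          exact hz.le
        have : |z|^(n-1) ≤ r^(n-1) := pow_le_pow_left₀ (abs_nonneg z) hz' _
        calc |p n| * ((n:ℝ) * |z|^(n-1)) ≤ |p n| * ((n:ℝ) * r^(n-1)) := by
              apply mul_le_mul_of_nonneg_left _ (abs_nonneg _)
              apply mul_le_mul_of_nonneg_left this (Nat.cast_nonneg n)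
          _ = (n:ℝ) * |p n| * r^(n-1) := by ring)
      (Metric.mem_ball_self hr0)
      (by
        apply summable_of_ne_finset_zero (s := {0})
        intro n hn
        have hn' : n ≠ 0 := by simpa using hn
        simp [zero_pow hn'])
      (by rwa [Metric.mem_ball, dist_zero_right, Real.norm_eq_abs])
  -- reindex derivative sum
  have hs : Summable (fun n => p n * ((n:ℝ) * y^(n-1))) := by
    refine Summable.of_norm_bounded hu fun n => ?_
    rw [Real.norm_eq_abs, abs_mul, abs_mul, Nat.abs_cast, abs_pow]
    have : |y|^(n-1) ≤ r^(n-1) := pow_le_pow_left₀ (abs_nonneg y) hyr.le _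
    calc |p n| * ((n:ℝ) * |y|^(n-1)) ≤ |p n| * ((n:ℝ) * r^(n-1)) := by
          apply mul_le_mul_of_nonneg_left _ (abs_nonneg _)
          apply mul_le_mul_of_nonneg_left this (Nat.cast_nonneg n)
      _ = (n:ℝ) * |p n| * r^(n-1) := by ring
  have hre : (∑' n, p n * ((n:ℝ) * y^(n-1))) = ∑' n : ℕ, ((n:ℝ)+1) * p (n+1) * y^n := by
    rw [Summable.tsum_eq_zero_add hs]
    simp only [Nat.cast_zero, zero_mul, mul_zero, zero_add, Nat.succ_sub_one]
    refine tsum_congr fun n => ?_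
    push_cast
    ring
  rwa [hre] at key
-- coefficient-specific facts
section coeffs
variable {a : ℝ}

lemma summable_dmaj (ha : 1/2 ≤ a) {r : ℝ} (hr0 : 0 ≤ r) (hr1 : r < 1) :
    Summable (fun n : ℕ => (ascPochhammer ℝ n).eval (2*a-1) / (n.factorial : ℝ) * r ^ n) := by
  have hb : 0 ≤ 2*a - 1 := by linarith
  rcases eq_or_lt_of_le hb with hb0 | hb0
  · apply summable_of_ne_finset_zero (s := {0})
    intro n hn
    have hn' : n ≠ 0 := by simpa using hn
    rw [← hb0, ascPochhammer_eval_zero, if_neg hn']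
    simp
  rcases eq_or_lt_of_le hr0 with hr00 | hr00
  · apply summable_of_ne_finset_zero (s := {0})
    intro n hn
    have hn' : n ≠ 0 := by simpa using hn
    rw [← hr00, zero_pow hn', mul_zero]
  set f : ℕ → ℝ := fun n => (ascPochhammer ℝ n).eval (2*a-1) / (n.factorial : ℝ) * r ^ n with hf
  have hfpos : ∀ n, 0 < f n := by
    intro n
    have h1 := ascPochhammer_pos n (2*a-1) hb0
    have h2 : (0:ℝ) < n.factorial := by exact_mod_cast n.factorial_pos
    positivity
  apply summable_of_ratio_test_tendsto_lt_one (l := r) hr1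
    (Filter.Eventually.of_forall fun n => (hfpos n).ne')
  have heq : ∀ n : ℕ, ‖f (n+1)‖ / ‖f n‖ = ((2*a-1+n)/(n+1)) * r := by
    intro n
    rw [Real.norm_eq_abs, Real.norm_eq_abs, abs_of_pos (hfpos _), abs_of_pos (hfpos _), hf]
    simp only
    rw [ascPochhammer_succ_eval, Nat.factorial_succ, pow_succ]
    have h1 := (ascPochhammer_pos n (2*a-1) hb0).ne'
    have h2 : ((n.factorial : ℝ)) ≠ 0 := by exact_mod_cast n.factorial_pos.ne'
    have h3 : ((n:ℝ)+1) ≠ 0 := by positivity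
    have h4 : r ≠ 0 := hr00.ne'
    push_cast
    field_simp
  rw [show (𝓝 r) = 𝓝 (1 * r) by rw [one_mul]]
  apply Filter.Tendsto.congr (fun n => (heq n).symm)
  apply Filter.Tendsto.mul_const r
  have : (fun n : ℕ => (2*a-1+n)/(n+1)) = fun n : ℕ => (2*a-1-1) * (1/(n+1)) + 1 := by
    funext n
    have h3 : ((n:ℝ)+1) ≠ 0 := by positivity
    field_simp
    ring
  rw [this, show (𝓝 (1:ℝ)) = 𝓝 ((2*a-1-1) * 0 + 1) by norm_num]
  exact (tendsto_one_div_add_atTop_nhds_zero_nat.const_mul _).add_const 1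

lemma abs_c_le (ha : 1/2 ≤ a) {c : ℕ → ℝ}
    (hc : ∀ n : ℕ, c n =
      ((ascPochhammer ℝ n).eval (2*a) * (ascPochhammer ℝ n).eval (1 - 2*a)) /
        ((ascPochhammer ℝ n).eval (4*a) * (Nat.factorial n : ℝ))) (n : ℕ) :
    |c n| ≤ (ascPochhammer ℝ n).eval (2*a-1) / (n.factorial : ℝ) := by
  have ha0 : (0:ℝ) < 2*a := by linarith
  have ha4 : (0:ℝ) < 4*a := by linarith
  have hb : 0 ≤ 2*a - 1 := by linarith
  have h2 := ascPochhammer_pos n (2*a) ha0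
  have h4 := ascPochhammer_pos n (4*a) ha4
  have hfac : (0:ℝ) < n.factorial := by exact_mod_cast n.factorial_pos
  have hneg : |(ascPochhammer ℝ n).eval (1-2*a)| ≤ (ascPochhammer ℝ n).eval (2*a-1) := by
    have := abs_asc_neg hb n
    rwa [show -(2*a-1) = 1-2*a by ring] at this
  have hmono : (ascPochhammer ℝ n).eval (2*a) ≤ (ascPochhammer ℝ n).eval (4*a) :=
    asc_mono ha0 (by linarith) n
  rw [hc n, abs_div, abs_mul, abs_of_pos h2, abs_of_pos (by positivity : (0:ℝ) <
    (ascPochhammer ℝ n).eval (4*a) * n.factorial)]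
  rw [div_le_div_iff₀ (by positivity) (by positivity)]
  have hnn := (abs_nonneg ((ascPochhammer ℝ n).eval (1-2*a)))
  nlinarith [mul_le_mul hmono hneg hnn h4.le,
    mul_le_mul_of_nonneg_right (mul_le_mul hmono hneg hnn h4.le) hfac.le]

lemma hgood_c (ha : 1/2 ≤ a) {c : ℕ → ℝ}
    (hc : ∀ n : ℕ, c n =
      ((ascPochhammer ℝ n).eval (2*a) * (ascPochhammer ℝ n).eval (1 - 2*a)) /
        ((ascPochhammer ℝ n).eval (4*a) * (Nat.factorial n : ℝ))) : Hgood c := by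
  intro r hr0 hr1
  refine Summable.of_nonneg_of_le (fun n => by positivity) (fun n => ?_) (summable_dmaj ha hr0 hr1)
  exact mul_le_mul_of_nonneg_right (abs_c_le ha hc n) (by positivity)

lemma hgood_e (ha : 1/2 ≤ a) :
    Hgood (fun n : ℕ => (ascPochhammer ℝ n).eval (1-2*a) / (n.factorial : ℝ)) := by
  intro r hr0 hr1
  refine Summable.of_nonneg_of_le (fun n => by positivity) (fun n => ?_) (summable_dmaj ha hr0 hr1)
  have hb : 0 ≤ 2*a - 1 := by linarith
  have hfac : (0:ℝ) < n.factorial := by exact_mod_cast n.factorial_pos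
  have hneg : |(ascPochhammer ℝ n).eval (1-2*a)| ≤ (ascPochhammer ℝ n).eval (2*a-1) := by
    have := abs_asc_neg hb n
    rwa [show -(2*a-1) = 1-2*a by ring] at this
  apply mul_le_mul_of_nonneg_right _ (by positivity)
  rw [abs_div, abs_of_pos hfac]
  exact div_le_div_of_nonneg_right hneg hfac.le

end coeffs
def C1 (c : ℕ → ℝ) : ℕ → ℝ := fun n => ((n:ℝ)+1) * c (n+1)

section odeseries
variable {a : ℝ} {c : ℕ → ℝ}

lemma c_rec (ha : 1/2 ≤ a)
    (hc : ∀ n : ℕ, c n =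
      ((ascPochhammer ℝ n).eval (2*a) * (ascPochhammer ℝ n).eval (1 - 2*a)) /
        ((ascPochhammer ℝ n).eval (4*a) * (Nat.factorial n : ℝ))) (n : ℕ) :
    ((n:ℝ)+1) * ((n:ℝ) + 4*a) * c (n+1) = ((n:ℝ) + 2*a) * ((n:ℝ) + 1 - 2*a) * c n := by
  have h4 := ascPochhammer_pos n (4*a) (by linarith)
  have h4n : (0:ℝ) < 4*a + n := by positivity
  have hfac : (0:ℝ) < n.factorial := by exact_mod_cast n.factorial_pos
  have hn1 : (0:ℝ) < (n:ℝ) + 1 := by positivity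
  rw [hc n, hc (n+1), ascPochhammer_succ_eval, ascPochhammer_succ_eval,
    ascPochhammer_succ_eval, Nat.factorial_succ]
  push_cast
  field_simp
  ring

lemma series_ode (ha : 1/2 ≤ a)
    (hc : ∀ n : ℕ, c n =
      ((ascPochhammer ℝ n).eval (2*a) * (ascPochhammer ℝ n).eval (1 - 2*a)) /
        ((ascPochhammer ℝ n).eval (4*a) * (Nat.factorial n : ℝ)))
    {y : ℝ} (hy : |y| < 1) :
    y * (1-y) * (∑' n : ℕ, C1 (C1 c) n * y^n) + (4*a - 2*y) * (∑' n : ℕ, C1 c n * y^n)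
      - 2*a*(1-2*a) * (∑' n : ℕ, c n * y^n) = 0 := by
  set G := ∑' n : ℕ, c n * y^n with hG_def
  set G1 := ∑' n : ℕ, C1 c n * y^n with hG1_def
  set G2 := ∑' n : ℕ, C1 (C1 c) n * y^n with hG2_def
  have hHc : Hgood c := hgood_c ha hc
  have hH1 : Hgood (C1 c) := hHc.shift
  have hH2 : Hgood (C1 (C1 c)) := hH1.shift
  have S0 := hHc.summable_at hy
  have S1 := hH1.summable_at hy
  have S2 := hH2.summable_at hy
  set q : ℕ → ℝ := fun n => (n:ℝ) * ((n:ℝ)+1) * c (n+1) * y^n with hqdef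
  set s : ℕ → ℝ := fun n => (n:ℝ) * c n * y^n with hsdef
  set rr : ℕ → ℝ := fun n => (n:ℝ) * ((n:ℝ)-1) * c n * y^n with hrrdef
  have hq1 : ∀ n : ℕ, q (n+1) = C1 (C1 c) n * y^(n+1) := by
    intro n; simp only [hqdef, C1]; push_cast; ring
  have hs1 : ∀ n : ℕ, s (n+1) = C1 c n * y^(n+1) := by
    intro n; simp only [hsdef, C1]; push_cast; ring
  have hrr2 : ∀ n : ℕ, rr (n+2) = C1 (C1 c) n * y^(n+2) := by
    intro n; simp only [hrrdef, C1]; push_cast; ring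
  have Sq : Summable q := by
    apply (summable_nat_add_iff 1).1
    refine (S2.mul_right y).congr fun n => ?_
    rw [hq1 n, pow_succ]; ring
  have Ss : Summable s := by
    apply (summable_nat_add_iff 1).1
    refine (S1.mul_right y).congr fun n => ?_
    rw [hs1 n, pow_succ]; ring
  have Srr : Summable rr := by
    apply (summable_nat_add_iff 2).1
    refine (S2.mul_right (y^2)).congr fun n => ?_
    rw [hrr2 n, pow_add]; ring
  have e1 : (∑' n, q n) = y * G2 := by
    rw [Summable.tsum_eq_zero_add Sq]
    have h0 : q 0 = 0 := by simp [hqdef]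
    rw [h0, zero_add, tsum_congr hq1,
      show (fun n : ℕ => C1 (C1 c) n * y^(n+1)) = fun n : ℕ => y * (C1 (C1 c) n * y^n) from
        funext fun n => by rw [pow_succ]; ring, tsum_mul_left]
  have e2 : (∑' n, rr n) = y^2 * G2 := by
    have Srr1 : Summable (fun n => rr (n+1)) := (summable_nat_add_iff 1).2 Srr
    rw [Summable.tsum_eq_zero_add Srr]
    have h0 : rr 0 = 0 := by simp [hrrdef]
    rw [h0, zero_add, Summable.tsum_eq_zero_add Srr1]
    have h1 : rr (0+1) = 0 := by simp [hrrdef]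
    rw [h1, zero_add, tsum_congr (fun n => hrr2 n),
      show (fun n : ℕ => C1 (C1 c) n * y^(n+2)) = fun n : ℕ => y^2 * (C1 (C1 c) n * y^n) from
        funext fun n => by rw [pow_add]; ring, tsum_mul_left]
  have e3 : (∑' n, s n) = y * G1 := by
    rw [Summable.tsum_eq_zero_add Ss]
    have h0 : s 0 = 0 := by simp [hsdef]
    rw [h0, zero_add, tsum_congr hs1,
      show (fun n : ℕ => C1 c n * y^(n+1)) = fun n : ℕ => y * (C1 c n * y^n) from
        funext fun n => by rw [pow_succ]; ring, tsum_mul_left]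
  have hG : HasSum (fun n => c n * y^n) G := S0.hasSum
  have hG1 : HasSum (fun n => C1 c n * y^n) G1 := S1.hasSum
  have hq : HasSum q (y * G2) := e1 ▸ Sq.hasSum
  have hrr : HasSum rr (y^2 * G2) := e2 ▸ Srr.hasSum
  have hs : HasSum s (y * G1) := e3 ▸ Ss.hasSum
  have comb : HasSum (fun n => (q n - rr n) + ((4*a) * (C1 c n * y^n) - 2 * s n)
      - (2*a*(1-2*a)) * (c n * y^n))
      ((y * G2 - y^2 * G2) + ((4*a) * G1 - 2 * (y * G1)) - (2*a*(1-2*a)) * G) :=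
    ((hq.sub hrr).add ((hG1.mul_left (4*a)).sub (hs.mul_left 2))).sub (hG.mul_left _)
  have hzero : (fun n : ℕ => (q n - rr n) + ((4*a) * (C1 c n * y^n) - 2 * s n)
      - (2*a*(1-2*a)) * (c n * y^n)) = fun _ => (0:ℝ) := by
    funext n
    have hrec := c_rec ha hc n
    have hE : (q n - rr n) + ((4*a) * (C1 c n * y^n) - 2 * s n)
        - (2*a*(1-2*a)) * (c n * y^n)
        = y^n * ((((n:ℝ)+1) * ((n:ℝ) + 4*a) * c (n+1))
            - (((n:ℝ) + 2*a) * ((n:ℝ) + 1 - 2*a) * c n)) := by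
      simp only [hqdef, hsdef, hrrdef, C1]; push_cast; ring
    rw [hE, hrec, sub_self, mul_zero]
  have hfin : (y * G2 - y^2 * G2) + ((4*a) * G1 - 2 * (y * G1)) - (2*a*(1-2*a)) * G = 0 :=
    (hzero ▸ comb).unique hasSum_zero
  linear_combination hfin
end odeseries
section binom
variable {a : ℝ}

lemma binomial_tsum (ha : 1/2 ≤ a) {x : ℝ} (hx0 : 0 ≤ x) (hx1 : x < 1) :
    ∑' n : ℕ, (ascPochhammer ℝ n).eval (1-2*a) / (n.factorial : ℝ) * x^n
      = (1-x) ^ (2*a-1) := by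
  set b := 2*a - 1 with hbdef
  have hb0 : 0 ≤ b := by simp only [hbdef]; linarith
  set e : ℕ → ℝ := fun n => (ascPochhammer ℝ n).eval (1-2*a) / (n.factorial : ℝ) with hedef
  have hHe : Hgood e := hgood_e ha
  have he_rec : ∀ n : ℕ, ((n:ℝ)+1) * e (n+1) = ((n:ℝ) + 1 - 2*a) * e n := by
    intro n
    have hfac : (0:ℝ) < n.factorial := by exact_mod_cast n.factorial_pos
    have hn1 : (0:ℝ) < (n:ℝ)+1 := by positivity
    simp only [hedef]
    rw [ascPochhammer_succ_eval, Nat.factorial_succ]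
    push_cast
    field_simp
    ring
  set S : ℝ → ℝ := fun z => ∑' n : ℕ, e n * z^n with hSdef
  have hderiv : ∀ y : ℝ, |y| < 1 → HasDerivAt S (∑' n : ℕ, C1 e n * y^n) y :=
    fun y hy => hHe.hasDerivAt_tsum hy
  have identity : ∀ z : ℝ, |z| < 1 → (1-z) * (∑' n : ℕ, C1 e n * z^n) + b * S z = 0 := by
    intro z hz
    have hH1 : Hgood (C1 e) := hHe.shift
    have S0 := hHe.summable_at hz
    have S1 := hH1.summable_at hz
    set s : ℕ → ℝ := fun n => (n:ℝ) * e n * z^n with hsdef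
    have hs1 : ∀ n : ℕ, s (n+1) = C1 e n * z^(n+1) := by
      intro n; simp only [hsdef, C1]; push_cast; ring
    have Ss : Summable s := by
      apply (summable_nat_add_iff 1).1
      refine (S1.mul_right z).congr fun n => ?_
      rw [hs1 n, pow_succ]; ring
    have e3 : (∑' n, s n) = z * (∑' n : ℕ, C1 e n * z^n) := by
      rw [Summable.tsum_eq_zero_add Ss]
      have h0 : s 0 = 0 := by simp [hsdef]
      rw [h0, zero_add, tsum_congr hs1,
        show (fun n : ℕ => C1 e n * z^(n+1)) = fun n : ℕ => z * (C1 e n * z^n) from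
          funext fun n => by rw [pow_succ]; ring, tsum_mul_left]
    have hsum1 : HasSum (fun n => C1 e n * z^n) (∑' n : ℕ, C1 e n * z^n) := S1.hasSum
    have hsum0 : HasSum (fun n => e n * z^n) (S z) := S0.hasSum
    have hsums : HasSum s (z * (∑' n : ℕ, C1 e n * z^n)) := e3 ▸ Ss.hasSum
    have comb : HasSum (fun n => (C1 e n * z^n - s n) + b * (e n * z^n))
        (((∑' n : ℕ, C1 e n * z^n) - z * (∑' n : ℕ, C1 e n * z^n)) + b * S z) :=
      (hsum1.sub hsums).add (hsum0.mul_left b)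
    have hzero : (fun n : ℕ => (C1 e n * z^n - s n) + b * (e n * z^n)) = fun _ => (0:ℝ) := by
      funext n
      have hrec := he_rec n
      have hE : (C1 e n * z^n - s n) + b * (e n * z^n)
          = z^n * ((((n:ℝ)+1) * e (n+1)) - (((n:ℝ) + 1 - 2*a) * e n)) := by
        simp only [hsdef, hbdef, C1]; ring
      rw [hE, hrec, sub_self, mul_zero]
    have hfin := (hzero ▸ comb).unique hasSum_zero
    linear_combination hfin
  -- constancy of W
  set W : ℝ → ℝ := fun z => S z * (1-z) ^ (-b) with hWdef
  have hW : ∀ z ∈ Icc (0:ℝ) x, HasDerivAt W 0 z := by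
    intro z hz
    have hz1 : z < 1 := lt_of_le_of_lt hz.2 hx1
    have hz01 : |z| < 1 := by rw [abs_of_nonneg hz.1]; exact hz1
    have h1z : (0:ℝ) < 1 - z := by linarith
    have hS' := hderiv z hz01
    have hrpow : HasDerivAt (fun w : ℝ => (1-w) ^ (-b)) (b * (1-z)^(-b-1)) z := by
      have h := (Real.hasDerivAt_rpow_const (x := 1-z) (p := -b) (Or.inl h1z.ne')).comp z
        ((hasDerivAt_id z).const_sub 1)
      refine h.congr_deriv (Eq.symm ?_)
      simp [Function.comp]
    have hmul := hS'.mul hrpow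
    refine hmul.congr_deriv (Eq.symm ?_)
    have hid := identity z hz01
    have hpow : (1-z)^(-b) = (1-z)^(-b-1) * (1-z) := by
      rw [show -b = -b-1+1 by ring, Real.rpow_add_one h1z.ne']
      ring_nf
    rw [hpow]
    linear_combination (-((1-z)^(-b-1))) * hid
  rcases eq_or_lt_of_le hx0 with hx00 | hx00
  · -- x = 0
    rw [← hx00]
    have : ∑' n : ℕ, e n * (0:ℝ)^n = e 0 * (0:ℝ)^0 := by
      apply tsum_eq_single 0
      intro n hn
      rw [zero_pow hn, mul_zero]
    simp only [pow_zero, mul_one] at this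
    simp only [hedef] at this ⊢
    rw [this]
    simp
  have hcont : ContinuousOn W (Icc 0 x) := fun z hz => ((hW z hz).continuousAt.continuousWithinAt)
  have hWx := constant_of_has_deriv_right_zero hcont
    (fun z hz => ((hW z (Ico_subset_Icc_self hz)).hasDerivWithinAt)) x (right_mem_Icc.2 hx0)
  -- W x = W 0
  have hS0 : S 0 = 1 := by
    have : ∑' n : ℕ, e n * (0:ℝ)^n = e 0 * (0:ℝ)^0 := by
      apply tsum_eq_single 0
      intro n hn
      rw [zero_pow hn, mul_zero]
    simp only [pow_zero, mul_one] at this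
    simp only [hSdef]
    rw [this]
    simp [hedef]
  have hW0 : W 0 = 1 := by
    simp only [hWdef]
    rw [hS0]
    norm_num
  rw [hW0] at hWx
  -- hWx : S x * (1-x)^(-b) = 1
  have h1x : (0:ℝ) < 1 - x := by linarith
  have hne : (1-x) ^ b ≠ 0 := (Real.rpow_pos_of_pos h1x b).ne'
  have hneg : (1-x) ^ (-b) = ((1-x)^b)⁻¹ := Real.rpow_neg h1x.le b
  simp only [hWdef, hneg] at hWx
  have : S x = (1-x)^b := by
    field_simp at hWx
    exact hWx
  simpa only [hSdef, hedef, hbdef] using this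
end binom
section beta
open MeasureTheory

lemma Gamma_add_nat {x : ℝ} (hx : 0 < x) (n : ℕ) :
    Real.Gamma (x + n) = (ascPochhammer ℝ n).eval x * Real.Gamma x := by
  induction n with
  | zero => simp
  | succ n ih =>
    have hxn : x + (n:ℝ) ≠ 0 := by positivity
    have h2 : x + ((n:ℝ)+1) = (x + (n:ℝ)) + 1 := by ring
    push_cast
    rw [h2, Real.Gamma_add_one hxn, ih, ascPochhammer_succ_eval]
    ring

lemma real_beta {x y : ℝ} (hx : 0 < x) (hy : 0 < y) :
    ∫ t in (0:ℝ)..1, t ^ (x-1) * (1-t) ^ (y-1)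
      = Real.Gamma x * Real.Gamma y / Real.Gamma (x+y) := by
  have h := Complex.Gamma_mul_Gamma_eq_betaIntegral (s := (x:ℂ)) (t := (y:ℂ))
    (by simpa using hx) (by simpa using hy)
  have hb : Complex.betaIntegral (x:ℂ) (y:ℂ)
      = ((∫ t in (0:ℝ)..1, t ^ (x-1) * (1-t) ^ (y-1) : ℝ) : ℂ) := by
    rw [Complex.betaIntegral, ← intervalIntegral.integral_ofReal]
    apply intervalIntegral.integral_congr
    intro t ht
    rw [Set.uIcc_of_le (by norm_num : (0:ℝ) ≤ 1)] at ht
    obtain ⟨ht0, ht1⟩ := ht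
    simp only
    rw [Complex.ofReal_mul, Complex.ofReal_cpow ht0, Complex.ofReal_cpow
      (by linarith : (0:ℝ) ≤ 1 - t)]
    push_cast
    ring
  rw [hb, Complex.Gamma_ofReal, Complex.Gamma_ofReal, ← Complex.ofReal_add,
    Complex.Gamma_ofReal] at h
  have h' : Real.Gamma x * Real.Gamma y
      = Real.Gamma (x+y) * ∫ t in (0:ℝ)..1, t ^ (x-1) * (1-t) ^ (y-1) := by
    exact_mod_cast h
  have hΓ : Real.Gamma (x+y) ≠ 0 := (Real.Gamma_pos_of_pos (by linarith)).ne'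
  rw [h']
  field_simp
end beta
section euler
open MeasureTheory
variable {a : ℝ} {c : ℕ → ℝ}

lemma tsum_mul_B0_eq (ha : 1/2 ≤ a)
    (hc : ∀ n : ℕ, c n =
      ((ascPochhammer ℝ n).eval (2*a) * (ascPochhammer ℝ n).eval (1 - 2*a)) /
        ((ascPochhammer ℝ n).eval (4*a) * (Nat.factorial n : ℝ)))
    {u : ℝ} (hu0 : 0 < u) (hu1 : u < 1) :
    Real.Gamma (2*a)^2 / Real.Gamma (4*a) * ∑' n : ℕ, c n * u^n
      = ∫ t in Set.Ioc (0:ℝ) 1, t^(2*a-1) * (1-t)^(2*a-1) * (1-u*t)^(2*a-1) := by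
  have hb0 : (0:ℝ) ≤ 2*a-1 := by linarith
  have ha2 : (0:ℝ) < 2*a := by linarith
  have ha4 : (0:ℝ) < 4*a := by linarith
  set e : ℕ → ℝ := fun n => (ascPochhammer ℝ n).eval (1-2*a) / (n.factorial : ℝ) with hedef
  set w : ℝ → ℝ := fun t => t^(2*a-1) * (1-t)^(2*a-1) with hwdef
  have hwcont : Continuous w := by
    apply (Real.continuous_rpow_const hb0).mul
    exact (Real.continuous_rpow_const hb0).comp (continuous_const.sub continuous_id)
  have hwmem : ∀ t ∈ Set.Ioc (0:ℝ) 1, 0 ≤ w t ∧ w t ≤ 1 := by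
    intro t ht
    obtain ⟨ht0, ht1⟩ := ht
    constructor
    · apply mul_nonneg (Real.rpow_nonneg ht0.le _) (Real.rpow_nonneg (by linarith) _)
    · have h1 : t ^ (2*a-1) ≤ 1 := Real.rpow_le_one ht0.le ht1 hb0
      have h2 : (1-t) ^ (2*a-1) ≤ 1 := Real.rpow_le_one (by linarith) (by linarith) hb0
      have h3 : 0 ≤ (1-t) ^ (2*a-1) := Real.rpow_nonneg (by linarith) _
      exact mul_le_one₀ h1 h3 h2
  set F : ℕ → ℝ → ℝ := fun n t => (e n * u^n) * (t^(n:ℕ) * w t) with hFdef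
  have hFcont : ∀ n, Continuous (F n) := fun n =>
    continuous_const.mul ((continuous_pow n).mul hwcont)
  have hFint : ∀ n, IntegrableOn (F n) (Set.Ioc (0:ℝ) 1) := fun n =>
    (hFcont n).integrableOn_Ioc
  have hFbound : ∀ n, ∀ t ∈ Set.Ioc (0:ℝ) 1, ‖F n t‖ ≤ |e n| * u^n := by
    intro n t ht
    obtain ⟨hw0, hw1⟩ := hwmem t ht
    obtain ⟨ht0, ht1⟩ := ht
    have htn : 0 ≤ t^(n:ℕ) := pow_nonneg ht0.le n
    have htn1 : t^(n:ℕ) ≤ 1 := pow_le_one₀ ht0.le ht1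
    rw [hFdef]
    simp only [Real.norm_eq_abs, abs_mul]
    rw [abs_of_nonneg (by positivity : (0:ℝ) ≤ u^n), abs_of_nonneg htn, abs_of_nonneg hw0]
    calc |e n| * u^n * (t^(n:ℕ) * w t) ≤ |e n| * u^n * (1 * 1) := by
          apply mul_le_mul_of_nonneg_left (mul_le_mul htn1 hw1 hw0 (by norm_num)) (by positivity)
      _ = |e n| * u^n := by ring
  have hnorm : ∀ n, (∫ t in Set.Ioc (0:ℝ) 1, ‖F n t‖) ≤ |e n| * u^n := by
    intro n
    have h1 : (∫ t in Set.Ioc (0:ℝ) 1, ‖F n t‖)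
        ≤ ∫ _t in Set.Ioc (0:ℝ) 1, (|e n| * u^n) := by
      apply setIntegral_mono_on (hFint n).norm (integrableOn_const (by simp))
        measurableSet_Ioc
      intro t ht
      exact hFbound n t ht
    calc (∫ t in Set.Ioc (0:ℝ) 1, ‖F n t‖) ≤ ∫ _t in Set.Ioc (0:ℝ) 1, (|e n| * u^n) := h1
      _ = |e n| * u^n := by simp
  have hsumnorm : Summable (fun n => ∫ t in Set.Ioc (0:ℝ) 1, ‖F n t‖) := by
    refine Summable.of_nonneg_of_le (fun n => integral_nonneg fun t => norm_nonneg _)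
      hnorm (hgood_e ha u hu0.le hu1)
  have hswap := integral_tsum_of_summable_integral_norm hFint hsumnorm
  -- pointwise sum
  have hpt : ∀ t ∈ Set.Ioc (0:ℝ) 1, (∑' n, F n t)
      = t^(2*a-1) * (1-t)^(2*a-1) * (1-u*t)^(2*a-1) := by
    intro t ht
    obtain ⟨ht0, ht1⟩ := ht
    have hut0 : 0 ≤ u*t := by positivity
    have hut1 : u*t < 1 := by nlinarith
    have h1 : (fun n : ℕ => F n t) = fun n : ℕ => (e n * (u*t)^n) * w t := by
      funext n
      rw [hFdef]
      simp only [mul_pow]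
      ring
    rw [h1, tsum_mul_right, binomial_tsum ha hut0 hut1]
    rw [hwdef]
    ring
  -- per-term integral value
  have hIn : ∀ n : ℕ, (∫ t in Set.Ioc (0:ℝ) 1, t^(n:ℕ) * w t)
      = Real.Gamma (2*a+n) * Real.Gamma (2*a) / Real.Gamma (4*a+n) := by
    intro n
    have hcongr : Set.EqOn (fun t : ℝ => t^(n:ℕ) * w t)
        (fun t => t^(2*a+n-1) * (1-t)^(2*a-1)) (Set.Ioc 0 1) := by
      intro t ht
      obtain ⟨ht0, ht1⟩ := ht
      simp only [hwdef]
      rw [show (2*a+(n:ℝ)-1) = (2*a-1) + n by ring, Real.rpow_add ht0, Real.rpow_natCast]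
      ring
    rw [setIntegral_congr_fun measurableSet_Ioc hcongr]
    have hβ := real_beta (x := 2*a+n) (y := 2*a) (by positivity) ha2
    rw [intervalIntegral.integral_of_le (by norm_num : (0:ℝ) ≤ 1)] at hβ
    rw [show (2*a+(n:ℝ)-1) = (2*a+n)-1 by ring]
    rw [hβ, show (2*a+(n:ℝ))+(2*a) = 4*a+n by ring]
  -- coefficient identity
  have hco : ∀ n : ℕ, Real.Gamma (2*a)^2 / Real.Gamma (4*a) * (c n * u^n)
      = (e n * u^n) * (Real.Gamma (2*a+n) * Real.Gamma (2*a) / Real.Gamma (4*a+n)) := by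
    intro n
    have h2 := ascPochhammer_pos n (2*a) ha2
    have h4 := ascPochhammer_pos n (4*a) ha4
    have hfac : (0:ℝ) < n.factorial := by exact_mod_cast n.factorial_pos
    have hg2 := Real.Gamma_pos_of_pos ha2
    have hg4 := Real.Gamma_pos_of_pos ha4
    rw [hc n, Gamma_add_nat ha2 n, Gamma_add_nat ha4 n, hedef]
    simp only
    field_simp
  -- assemble
  rw [← tsum_mul_left]
  have hterm : (fun n : ℕ => Real.Gamma (2*a)^2 / Real.Gamma (4*a) * (c n * u^n))
      = fun n : ℕ => ∫ t in Set.Ioc (0:ℝ) 1, F n t := by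
    funext n
    rw [hco n, hFdef]
    simp only
    rw [MeasureTheory.integral_const_mul, hIn n]
  rw [hterm, hswap]
  exact setIntegral_congr_fun measurableSet_Ioc hpt
end euler
/-- For real `a ≥ 1/2`, the function
`φ(u) = [Γ(2a)Γ(6a−1)/(Γ(4a)Γ(4a−1))] · u^a · F(2a, 1−2a, 4a; u)`
(where the hypergeometric series has coefficients built from ascending factorials)
satisfies: (i) the series converges on (0,1); (ii) the ODE
`u²(1−u)²φ'' + 2u(a − u + (1−a)u²)φ' − a(3a−1)(1−u)²φ = 0` on (0,1);
(iii) `φ(u) → 0` as `u → 0+` and `φ(u) → 1` as `u → 1−`. -/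
theorem statement0 (a : ℝ) (ha : 1/2 ≤ a)
    (c : ℕ → ℝ)
    (hc : ∀ n : ℕ, c n =
      ((ascPochhammer ℝ n).eval (2*a) * (ascPochhammer ℝ n).eval (1 - 2*a)) /
        ((ascPochhammer ℝ n).eval (4*a) * (Nat.factorial n : ℝ)))
    (φ : ℝ → ℝ)
    (hφ : ∀ u : ℝ, φ u =
      (Real.Gamma (2*a) * Real.Gamma (6*a - 1) /
        (Real.Gamma (4*a) * Real.Gamma (4*a - 1))) * u ^ a * ∑' n : ℕ, c n * u ^ n) :
    (∀ u ∈ Set.Ioo (0:ℝ) 1, Summable (fun n : ℕ => c n * u ^ n)) ∧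
    (∀ u ∈ Set.Ioo (0:ℝ) 1,
      u^2 * (1-u)^2 * deriv (deriv φ) u
        + 2*u*(a - u + (1-a)*u^2) * deriv φ u
        - a*(3*a-1)*(1-u)^2 * φ u = 0) ∧
    Tendsto φ (nhdsWithin 0 (Set.Ioi 0)) (nhds 0) ∧
    Tendsto φ (nhdsWithin 1 (Set.Iio 1)) (nhds 1) := by
  have ha0 : (0:ℝ) < a := by linarith
  have ha2 : (0:ℝ) < 2*a := by linarith
  have ha4 : (0:ℝ) < 4*a := by linarith
  have ha41 : (0:ℝ) < 4*a-1 := by linarith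
  have ha61 : (0:ℝ) < 6*a-1 := by linarith
  set K := Real.Gamma (2*a) * Real.Gamma (6*a - 1) /
      (Real.Gamma (4*a) * Real.Gamma (4*a - 1)) with hKdef
  have hHc : Hgood c := hgood_c ha hc
  set g : ℝ → ℝ := fun z => ∑' n : ℕ, c n * z^n with hgdef
  set g1 : ℝ → ℝ := fun z => ∑' n : ℕ, C1 c n * z^n with hg1def
  set g2 : ℝ → ℝ := fun z => ∑' n : ℕ, C1 (C1 c) n * z^n with hg2def
  have hder : ∀ y : ℝ, |y| < 1 → HasDerivAt g (g1 y) y := fun y hy => hHc.hasDerivAt_tsum hy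
  have hder1 : ∀ y : ℝ, |y| < 1 → HasDerivAt g1 (g2 y) y :=
    fun y hy => Hgood.hasDerivAt_tsum hHc.shift hy
  have hφfun : φ = fun v => K * (v ^ a * g v) := by
    funext v
    rw [hφ v]
    simp only [hgdef]
    ring
  set Φ1 : ℝ → ℝ := fun v => K * (a * v^(a-1) * g v + v^a * g1 v) with hΦ1def
  have hd1 : ∀ v ∈ Set.Ioo (0:ℝ) 1, HasDerivAt φ (Φ1 v) v := by
    intro v hv
    have hv0 : (0:ℝ) < v := hv.1
    have hvabs : |v| < 1 := by rw [abs_of_pos hv0]; exact hv.2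
    have hrpow : HasDerivAt (fun w : ℝ => w ^ a) (a * v^(a-1)) v :=
      Real.hasDerivAt_rpow_const (p := a) (Or.inl hv0.ne')
    have hprod := (hrpow.mul (hder v hvabs)).const_mul K
    rw [hφfun]
    simp only [hΦ1def]
    exact hprod
  refine ⟨?_, ?_, ?_, ?_⟩
  · intro u hu
    have : |u| < 1 := by rw [abs_of_pos hu.1]; exact hu.2
    exact hHc.summable_at this
  · -- ODE
    intro u hu
    have hu0 : (0:ℝ) < u := hu.1
    have hu1 : u < 1 := hu.2
    have huabs : |u| < 1 := by rw [abs_of_pos hu0]; exact hu1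
    have hune : u ≠ 0 := hu0.ne'
    have hrpow1 : HasDerivAt (fun w : ℝ => w ^ (a-1)) ((a-1) * u^(a-2)) u := by
      have h := Real.hasDerivAt_rpow_const (x := u) (p := a-1) (Or.inl hune)
      rwa [show a-1-1 = a-2 by ring] at h
    have hrpowa : HasDerivAt (fun w : ℝ => w ^ a) (a * u^(a-1)) u :=
      Real.hasDerivAt_rpow_const (p := a) (Or.inl hune)
    have hA := (hrpow1.const_mul a).mul (hder u huabs)
    have hB := hrpowa.mul (hder1 u huabs)
    have hd2 := (hA.add hB).const_mul K
    have hev : deriv φ =ᶠ[nhds u] Φ1 :=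
      Filter.eventually_of_mem (isOpen_Ioo.mem_nhds hu) (fun v hv => (hd1 v hv).deriv)
    have h2nd : deriv (deriv φ) u = K * ((a * ((a-1) * u^(a-2)) * g u + a * u^(a-1) * g1 u)
        + (a * u^(a-1) * g1 u + u^a * g2 u)) := by
      rw [hev.deriv_eq]
      apply HasDerivAt.deriv
      simp only [hΦ1def]
      exact hd2
    have h1st : deriv φ u = Φ1 u := (hd1 u hu).deriv
    have hser : u * (1-u) * g2 u + (4*a - 2*u) * g1 u - 2*a*(1-2*a) * g u = 0 :=
      series_ode ha hc huabs
    have e2 : u^(a-2) * u = u^(a-1) := by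
      rw [← Real.rpow_add_one hune]
      congr 1
      ring
    have e1 : u^(a-2) * u * u = u^a := by
      rw [← Real.rpow_add_one hune, ← Real.rpow_add_one hune]
      congr 1
      ring
    have hgu : (∑' n : ℕ, c n * u ^ n) = g u := by rw [hgdef]
    rw [h2nd, h1st, hφ u, hgu]
    simp only [hΦ1def]
    rw [← e1, ← e2]
    linear_combination (K * u^(a-2) * u^3 * (1-u)) * hser
  · -- limit at 0
    have hg_cont : ContinuousAt g 0 := (hder 0 (by norm_num)).continuousAt
    have hc0 : c 0 = 1 := by rw [hc 0]; simp
    have hg0 : g 0 = 1 := by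
      have h1 : ∑' n : ℕ, c n * (0:ℝ)^n = c 0 * (0:ℝ)^0 :=
        tsum_eq_single 0 (fun n hn => by rw [zero_pow hn, mul_zero])
      rw [hgdef]
      simp only
      rw [h1, hc0]
      norm_num
    have hgt : Tendsto g (nhdsWithin 0 (Set.Ioi 0)) (nhds 1) := by
      have h2 := hg_cont.tendsto
      rw [hg0] at h2
      exact h2.mono_left nhdsWithin_le_nhds
    have hpt : Tendsto (fun v : ℝ => v ^ a) (nhdsWithin 0 (Set.Ioi 0)) (nhds 0) := by
      have hca : ContinuousAt (fun v : ℝ => v ^ a) 0 :=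
        Real.continuousAt_rpow_const 0 a (Or.inr ha0.le)
      have h2 := hca.tendsto
      rw [Real.zero_rpow ha0.ne'] at h2
      exact h2.mono_left nhdsWithin_le_nhds
    rw [hφfun]
    have h3 : Tendsto (fun v : ℝ => K * (v ^ a * g v)) (nhdsWithin 0 (Set.Ioi 0))
        (nhds (K * (0 * 1))) := tendsto_const_nhds.mul (hpt.mul hgt)
    simpa using h3
  · -- limit at 1
    have hb0 : (0:ℝ) ≤ 2*a-1 := by linarith
    have hg2a := Real.Gamma_pos_of_pos ha2
    have hg4a := Real.Gamma_pos_of_pos ha4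
    have hg41 := Real.Gamma_pos_of_pos ha41
    have hg61 := Real.Gamma_pos_of_pos ha61
    set B0 := Real.Gamma (2*a)^2 / Real.Gamma (4*a) with hB0def
    have hB0pos : 0 < B0 := div_pos (pow_pos hg2a 2) hg4a
    set J : ℝ → ℝ := fun v => ∫ t in Set.Ioo (0:ℝ) 1,
      t^(2*a-1) * (1-t)^(2*a-1) * (1-v*t)^(2*a-1) with hJdef
    have hJeq : ∀ v, 0 < v → v < 1 → B0 * g v = J v := by
      intro v hv0 hv1
      have h1 := tsum_mul_B0_eq ha hc hv0 hv1
      have h2 : (∫ t in Set.Ioc (0:ℝ) 1, t^(2*a-1) * (1-t)^(2*a-1) * (1-v*t)^(2*a-1))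
          = J v := MeasureTheory.integral_Ioc_eq_integral_Ioo
      rw [hB0def]
      show Real.Gamma (2*a)^2 / Real.Gamma (4*a) * (∑' n : ℕ, c n * v^n) = J v
      rw [h1, h2]
    have hcont : ∀ v : ℝ, Continuous (fun t : ℝ =>
        t^(2*a-1) * (1-t)^(2*a-1) * (1-v*t)^(2*a-1)) := by
      intro v
      apply Continuous.mul
      · exact (Real.continuous_rpow_const hb0).mul
          ((Real.continuous_rpow_const hb0).comp (continuous_const.sub continuous_id))
      · exact (Real.continuous_rpow_const hb0).comp
          (continuous_const.sub (continuous_const.mul continuous_id))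
    have hJtends : Tendsto J (nhdsWithin 1 (Set.Iio 1)) (nhds (J 1)) := by
      rw [hJdef]
      simp only
      apply MeasureTheory.tendsto_integral_filter_of_dominated_convergence
        (bound := fun _ => (1:ℝ))
      · exact Filter.Eventually.of_forall fun v => (hcont v).aestronglyMeasurable
      · filter_upwards [Ioo_mem_nhdsLT_of_mem
          (by norm_num : (1:ℝ) ∈ Set.Ioc (0:ℝ) 1)] with v hv
        filter_upwards [MeasureTheory.ae_restrict_mem measurableSet_Ioo] with t ht
        have ht0 : (0:ℝ) < t := ht.1
        have ht1 : t < 1 := ht.2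
        have hv0 : (0:ℝ) < v := hv.1
        have hv1 : v < 1 := hv.2
        have hvt0 : (0:ℝ) ≤ 1 - v*t := by nlinarith
        have hvt1 : 1 - v*t ≤ 1 := by nlinarith
        have p1 : t^(2*a-1) ≤ 1 := Real.rpow_le_one ht0.le ht1.le hb0
        have p2 : (1-t)^(2*a-1) ≤ 1 := Real.rpow_le_one (by linarith) (by linarith) hb0
        have p3 : (1-v*t)^(2*a-1) ≤ 1 := Real.rpow_le_one hvt0 hvt1 hb0
        have q1 : (0:ℝ) ≤ t^(2*a-1) := Real.rpow_nonneg ht0.le _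
        have q2 : (0:ℝ) ≤ (1-t)^(2*a-1) := Real.rpow_nonneg (by linarith) _
        have q3 : (0:ℝ) ≤ (1-v*t)^(2*a-1) := Real.rpow_nonneg hvt0 _
        rw [Real.norm_eq_abs, abs_of_nonneg (by positivity)]
        exact mul_le_one₀ (mul_le_one₀ p1 q2 p2) q3 p3
      · exact MeasureTheory.integrable_const 1
      · filter_upwards [MeasureTheory.ae_restrict_mem measurableSet_Ioo] with t ht
        have h1t : (0:ℝ) < 1 - 1*t := by rw [one_mul]; linarith [ht.2]
        have hbase : ContinuousAt (fun v : ℝ => 1 - v*t) 1 :=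
          (continuous_const.sub (continuous_id.mul continuous_const)).continuousAt
        have hpowc : ContinuousAt (fun s : ℝ => s^(2*a-1)) (1-1*t) :=
          Real.continuousAt_rpow_const _ _ (Or.inl h1t.ne')
        have hb2 : Tendsto (fun v : ℝ => 1 - v*t) (nhds 1) (nhds (1-1*t)) := hbase
        have h4 : Tendsto (fun v : ℝ => (1 - v*t)^(2*a-1)) (nhds 1)
            (nhds ((1-1*t)^(2*a-1))) := hpowc.tendsto.comp hb2
        exact (tendsto_const_nhds.mul h4).mono_left nhdsWithin_le_nhds
    have hJ1 : J 1 = Real.Gamma (2*a) * Real.Gamma (4*a-1) / Real.Gamma (6*a-1) := by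
      rw [hJdef]
      simp only
      have hcg : Set.EqOn (fun t : ℝ => t^(2*a-1) * (1-t)^(2*a-1) * (1-1*t)^(2*a-1))
          (fun t : ℝ => t^(2*a-1) * (1-t)^(4*a-2)) (Set.Ioo 0 1) := by
        intro t ht
        have h1t : (0:ℝ) < 1 - t := by linarith [ht.2]
        simp only [one_mul]
        rw [show (4*a-2 : ℝ) = (2*a-1) + (2*a-1) by ring, Real.rpow_add h1t]
        ring
      rw [MeasureTheory.setIntegral_congr_fun measurableSet_Ioo hcg,
        ← MeasureTheory.integral_Ioc_eq_integral_Ioo]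
      have hβ := real_beta (x := 2*a) (y := 4*a-1) ha2 ha41
      rw [intervalIntegral.integral_of_le (by norm_num : (0:ℝ) ≤ 1)] at hβ
      rw [show (4*a-1-1 : ℝ) = 4*a-2 by ring] at hβ
      rw [show (2*a + (4*a-1) : ℝ) = 6*a-1 by ring] at hβ
      exact hβ
    have hT1 : Tendsto (fun v : ℝ => v ^ a) (nhdsWithin 1 (Set.Iio 1)) (nhds 1) := by
      have hca : ContinuousAt (fun v : ℝ => v ^ a) 1 :=
        Real.continuousAt_rpow_const 1 a (Or.inl one_ne_zero)
      have h2 := hca.tendsto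
      rw [Real.one_rpow] at h2
      exact h2.mono_left nhdsWithin_le_nhds
    have hTg : Tendsto (fun v => K * (v ^ a * (J v / B0))) (nhdsWithin 1 (Set.Iio 1))
        (nhds (K * (1 * (J 1 / B0)))) :=
      tendsto_const_nhds.mul (hT1.mul (hJtends.div_const B0))
    have heq : ∀ᶠ v in nhdsWithin 1 (Set.Iio 1), K * (v ^ a * (J v / B0)) = φ v := by
      filter_upwards [Ioo_mem_nhdsLT_of_mem
        (by norm_num : (1:ℝ) ∈ Set.Ioc (0:ℝ) 1)] with v hv
      rw [hφfun]
      have h5 := hJeq v hv.1 hv.2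
      rw [← h5]
      field_simp
    have hfin := hTg.congr' heq
    have hval : K * (1 * (J 1 / B0)) = 1 := by
      rw [hJ1, hB0def, hKdef]
      have := hg41.ne'
      have := hg61.ne'
      field_simp
      ring_nf
      have h6 : Real.Gamma (-1 + a*6) ≠ 0 := by rw [show -1 + a*6 = 6*a-1 by ring]; exact hg61.ne'
      have h4 : Real.Gamma (-1 + a*4) ≠ 0 := by rw [show -1 + a*4 = 4*a-1 by ring]; exact hg41.ne'
      field_simp
    rw [hval] at hfin
    exact hfin
end

section
/- Let a ∈ ℝ and b = (3a−1)/2. Let φ : (0,1) → ℝ be twice continuously differentiable and define H(x,y) = φ(x/y) for 0 < x < y. Then H satisfies the partial differential equation −ab(1/x − 1/y)² H + (a/x) ∂ₓH + (a/y) ∂_yH + (1/2) ∂ₓₓH + (1/2) ∂_yyH + ∂ₓ_yH = 0 at every point (x,y) with 0 < x < y if and only if φ satisfies the ordinary differential equation u²(1−u)²φ''(u) + 2u(a − u + (1−a)u²)φ'(u) − a(3a−1)(1−u)²φ(u) = 0 at every u ∈ (0,1). -/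
open Set Filter

/-- With `b = (3a−1)/2` and `φ` twice continuously differentiable on `(0,1)`,
the function `H(x,y) = φ(x/y)` satisfies the PDE
`−ab(1/x − 1/y)² H + (a/x)∂ₓH + (a/y)∂_yH + ½∂ₓₓH + ½∂_yyH + ∂ₓ_yH = 0`
on `{0 < x < y}` if and only if `φ` satisfies the ODE
`u²(1−u)²φ'' + 2u(a − u + (1−a)u²)φ' − a(3a−1)(1−u)²φ = 0` on `(0,1)`. -/
theorem statement1 (a b : ℝ) (hb : b = (3*a - 1)/2)
    (φ φ' φ'' : ℝ → ℝ)
    (hφ' : ∀ u ∈ Set.Ioo (0:ℝ) 1, HasDerivAt φ (φ' u) u)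
    (hφ'' : ∀ u ∈ Set.Ioo (0:ℝ) 1, HasDerivAt φ' (φ'' u) u)
    (hφ''cont : ContinuousOn φ'' (Set.Ioo (0:ℝ) 1))
    (H Hx Hy Hxx Hyy Hxy : ℝ → ℝ → ℝ)
    (hH : ∀ x y : ℝ, H x y = φ (x / y))
    (hHx : ∀ x y : ℝ, Hx x y = deriv (fun s => H s y) x)
    (hHy : ∀ x y : ℝ, Hy x y = deriv (fun t => H x t) y)
    (hHxx : ∀ x y : ℝ, Hxx x y = deriv (fun s => Hx s y) x)
    (hHyy : ∀ x y : ℝ, Hyy x y = deriv (fun t => Hy x t) y)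
    (hHxy : ∀ x y : ℝ, Hxy x y = deriv (fun t => Hx x t) y) :
    (∀ x y : ℝ, 0 < x → x < y →
        -(a*b) * (1/x - 1/y)^2 * H x y + (a/x) * Hx x y + (a/y) * Hy x y
          + (1/2) * Hxx x y + (1/2) * Hyy x y + Hxy x y = 0)
      ↔ (∀ u ∈ Set.Ioo (0:ℝ) 1,
          u^2 * (1-u)^2 * φ'' u + 2*u*(a - u + (1-a)*u^2) * φ' u
            - a*(3*a-1)*(1-u)^2 * φ u = 0) := by
  -- membership of the ratio
  have hmem : ∀ s t : ℝ, 0 < s → s < t → s / t ∈ Set.Ioo (0:ℝ) 1 := by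
    intro s t hs hst
    exact ⟨div_pos hs (hs.trans hst), (div_lt_one (hs.trans hst)).2 hst⟩
  -- derivative in the first variable
  have hdx : ∀ s t : ℝ, 0 < s → s < t →
      HasDerivAt (fun s' => H s' t) (φ' (s/t) * (1/t)) s := by
    intro s t hs hst
    have h1 : HasDerivAt (fun s' : ℝ => s' / t) (1/t) s := by
      simpa using (hasDerivAt_id s).div_const t
    have := (hφ' _ (hmem s t hs hst)).comp s h1
    simp only [hH]
    simpa [Function.comp_def] using this
  have hx : ∀ s t : ℝ, 0 < s → s < t → Hx s t = φ' (s/t) * (1/t) := by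
    intro s t hs hst
    rw [hHx]; exact (hdx s t hs hst).deriv
  -- derivative in the second variable
  have hdyaux : ∀ s t : ℝ, 0 < s → s < t →
      HasDerivAt (fun t' : ℝ => s / t') (s * (-1 / t^2)) t := by
    intro s t hs hst
    have ht : (0:ℝ) < t := hs.trans hst
    have h1 : HasDerivAt (fun t' : ℝ => t'⁻¹) (-1 / t^2) t := by
      simpa [neg_div, one_div] using hasDerivAt_inv (ne_of_gt ht)
    simpa [div_eq_mul_inv, mul_comm] using h1.const_mul s
  have hdy : ∀ s t : ℝ, 0 < s → s < t →
      HasDerivAt (fun t' => H s t') (φ' (s/t) * (s * (-1 / t^2))) t := by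
    intro s t hs hst
    have := (hφ' _ (hmem s t hs hst)).comp t (hdyaux s t hs hst)
    simp only [hH]
    simpa [Function.comp_def] using this
  have hy : ∀ s t : ℝ, 0 < s → s < t → Hy s t = φ' (s/t) * (s * (-1 / t^2)) := by
    intro s t hs hst
    rw [hHy]; exact (hdy s t hs hst).deriv
  -- now the key identity
  have key : ∀ x y : ℝ, 0 < x → x < y →
      -(a*b) * (1/x - 1/y)^2 * H x y + (a/x) * Hx x y + (a/y) * Hy x y
        + (1/2) * Hxx x y + (1/2) * Hyy x y + Hxy x y
      = (1/(2*x^2)) * ((x/y)^2 * (1-(x/y))^2 * φ'' (x/y)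
          + 2*(x/y)*(a - (x/y) + (1-a)*(x/y)^2) * φ' (x/y)
          - a*(3*a-1)*(1-(x/y))^2 * φ (x/y)) := by
    intro x y hx0 hxy
    have hy0 : (0:ℝ) < y := hx0.trans hxy
    have hu := hmem x y hx0 hxy
    -- Hxx
    have hxx : Hxx x y = φ'' (x/y) * (1/y) * (1/y) := by
      rw [hHxx]
      have hev : (fun s => Hx s y) =ᶠ[nhds x] (fun s => φ' (s/y) * (1/y)) := by
        filter_upwards [Ioo_mem_nhds hx0 hxy] with s hs
        exact hx s y hs.1 hs.2
      rw [hev.deriv_eq]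
      have h1 : HasDerivAt (fun s : ℝ => s / y) (1/y) x := by
        simpa using (hasDerivAt_id x).div_const y
      have := ((hφ'' _ hu).comp x h1).mul_const (1/y)
      exact this.deriv
    -- Hyy
    have hgy : HasDerivAt (fun t : ℝ => φ' (x/t) * (x * (-1 / t^2)))
        (φ'' (x/y) * (x * (-1 / y^2)) * (x * (-1 / y^2))
          + φ' (x/y) * (x * (2 / y^3))) y := by
      have hA : HasDerivAt (fun t : ℝ => φ' (x/t)) (φ'' (x/y) * (x * (-1 / y^2))) y :=
        (hφ'' _ hu).comp y (hdyaux x y hx0 hxy)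
      have hB : HasDerivAt (fun t : ℝ => x * (-1 / t^2)) (x * (2 / y^3)) y := by
        have h2 : HasDerivAt (fun t : ℝ => (t^2)⁻¹) (-(2*y) / (y^2)^2) y := by
          simpa [Pi.inv_def] using (hasDerivAt_pow 2 y).inv (by positivity)
        have := (h2.const_mul (-x : ℝ))
        convert this.congr_deriv ?_ using 1
        · rfl
        · rfl
        · funext t; ring
        · field_simp
      exact hA.mul hB
    have hyy : Hyy x y = φ'' (x/y) * (x * (-1 / y^2)) * (x * (-1 / y^2))
          + φ' (x/y) * (x * (2 / y^3)) := by
      rw [hHyy]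
      have hev : (fun t => Hy x t) =ᶠ[nhds y] (fun t => φ' (x/t) * (x * (-1 / t^2))) := by
        filter_upwards [Ioi_mem_nhds hxy] with t ht
        exact hy x t hx0 ht
      rw [hev.deriv_eq]
      exact hgy.deriv
    -- Hxy
    have hgxy : HasDerivAt (fun t : ℝ => φ' (x/t) * (1/t))
        (φ'' (x/y) * (x * (-1 / y^2)) * (1/y) + φ' (x/y) * (-1 / y^2)) y := by
      have hA : HasDerivAt (fun t : ℝ => φ' (x/t)) (φ'' (x/y) * (x * (-1 / y^2))) y :=
        (hφ'' _ hu).comp y (hdyaux x y hx0 hxy)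
      have hB : HasDerivAt (fun t : ℝ => 1/t) (-1 / y^2) y := by
        simpa [neg_div, one_div] using hasDerivAt_inv (ne_of_gt hy0)
      exact hA.mul hB
    have hxy' : Hxy x y = φ'' (x/y) * (x * (-1 / y^2)) * (1/y) + φ' (x/y) * (-1 / y^2) := by
      rw [hHxy]
      have hev : (fun t => Hx x t) =ᶠ[nhds y] (fun t => φ' (x/t) * (1/t)) := by
        filter_upwards [Ioi_mem_nhds hxy] with t ht
        exact hx x t hx0 ht
      rw [hev.deriv_eq]
      exact hgxy.deriv
    rw [hH, hx x y hx0 hxy, hy x y hx0 hxy, hxx, hyy, hxy', hb]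
    have hx0' : x ≠ 0 := ne_of_gt hx0
    have hy0' : y ≠ 0 := ne_of_gt hy0
    field_simp
    ring
  constructor
  · intro hpde u hu
    obtain ⟨hu0, hu1⟩ := hu
    have := hpde u 1 hu0 hu1
    rw [key u 1 hu0 hu1] at this
    have h2 : (1/(2*u^2)) ≠ 0 := by positivity
    have := (mul_eq_zero.1 this).resolve_left h2
    simpa using this
  · intro hode x y hx0 hxy
    rw [key x y hx0 hxy, hode _ (hmem x y hx0 hxy)]
    ring
end

section
/- Let a ∈ ℝ. Let φ : (0,1) → ℝ be twice differentiable and define ψ : (0,1) → ℝ by ψ(u) = u^{−a}(1−u)^{1−4a}φ(u). Then φ satisfies the ordinary differential equation u²(1−u)²φ''(u) + 2u(a − u + (1−a)u²)φ'(u) − a(3a−1)(1−u)²φ(u) = 0 on (0,1) if and only if ψ satisfies the hypergeometric differential equation u(1−u)ψ''(u) + (4a − 8au)ψ'(u) − 2a(6a−1)ψ(u) = 0 on (0,1). -/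
open Set Filter

/-- For `φ` twice differentiable on `(0,1)` and
`ψ(u) = u^{−a}(1−u)^{1−4a}φ(u)`, the function `φ` satisfies
`u²(1−u)²φ'' + 2u(a − u + (1−a)u²)φ' − a(3a−1)(1−u)²φ = 0` on `(0,1)`
if and only if `ψ` satisfies the hypergeometric equation
`u(1−u)ψ'' + (4a − 8au)ψ' − 2a(6a−1)ψ = 0` on `(0,1)`. -/
theorem statement2 (a : ℝ)
    (φ φ' φ'' ψ : ℝ → ℝ)
    (hφ' : ∀ u ∈ Set.Ioo (0:ℝ) 1, HasDerivAt φ (φ' u) u)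
    (hφ'' : ∀ u ∈ Set.Ioo (0:ℝ) 1, HasDerivAt φ' (φ'' u) u)
    (hψ : ∀ u : ℝ, ψ u = u ^ (-a) * (1 - u) ^ (1 - 4*a) * φ u) :
    (∀ u ∈ Set.Ioo (0:ℝ) 1,
        u^2 * (1-u)^2 * φ'' u + 2*u*(a - u + (1-a)*u^2) * φ' u
          - a*(3*a-1)*(1-u)^2 * φ u = 0)
      ↔ (∀ u ∈ Set.Ioo (0:ℝ) 1,
          u * (1-u) * deriv (deriv ψ) u + (4*a - 8*a*u) * deriv ψ u
            - 2*a*(6*a-1) * ψ u = 0) := by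
  set W : ℝ → ℝ := fun u => u ^ (-a) * (1 - u) ^ (1 - 4*a) with hWdef
  set g : ℝ → ℝ := fun u => -a / u - (1 - 4*a) / (1 - u) with hgdef
  set g' : ℝ → ℝ := fun u => a / u^2 - (1 - 4*a) / (1 - u)^2 with hg'def
  set P : ℝ → ℝ := fun u => g u * φ u + φ' u with hPdef
  have hψfun : ψ = fun u => W u * φ u := funext fun u => hψ u
  -- derivative of W
  have hWd : ∀ u ∈ Set.Ioo (0:ℝ) 1, HasDerivAt W (W u * g u) u := by
    intro u hu
    have hu0 : (0:ℝ) < u := hu.1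
    have hu1 : (0:ℝ) < 1 - u := by linarith [hu.2]
    have hF : HasDerivAt (fun x : ℝ => x ^ (-a)) (-a * u ^ (-a - 1)) u :=
      Real.hasDerivAt_rpow_const (Or.inl hu0.ne')
    have h1 : HasDerivAt (fun x : ℝ => 1 - x) (-1) u := by
      simpa using (hasDerivAt_id u).const_sub 1
    have hG := h1.rpow_const (p := 1 - 4*a) (Or.inl hu1.ne')
    have hmul := hF.mul hG
    refine hmul.congr_deriv ?_
    have e1 : u ^ (-a - 1) = u ^ (-a) / u := by
      rw [Real.rpow_sub hu0, Real.rpow_one]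
    have e2 : (1 - u) ^ (1 - 4*a - 1) = (1 - u) ^ (1 - 4*a) / (1 - u) := by
      rw [Real.rpow_sub hu1, Real.rpow_one]
    simp only [hWdef, hgdef, e1, e2]
    field_simp
    ring
  -- derivative of g
  have hgd : ∀ u ∈ Set.Ioo (0:ℝ) 1, HasDerivAt g (g' u) u := by
    intro u hu
    have hu0 : u ≠ 0 := hu.1.ne'
    have hu1 : (1:ℝ) - u ≠ 0 := by have := hu.2; intro h; nlinarith
    have h1 : HasDerivAt (fun x : ℝ => -a / x) (a / u^2) u := by
      have := (hasDerivAt_inv hu0).const_mul (-a)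
      refine this.congr_deriv ?_
      field_simp
    have h2 : HasDerivAt (fun x : ℝ => (1 - 4*a) / (1 - x)) ((1 - 4*a) / (1 - u)^2) u := by
      have hs : HasDerivAt (fun x : ℝ => 1 - x) (-1) u := by
        simpa using (hasDerivAt_id u).const_sub 1
      have := (hs.inv hu1).const_mul (1 - 4*a)
      refine this.congr_deriv ?_
      field_simp
    have := h1.sub h2
    exact this
  -- first derivative of ψ
  have hψd : ∀ u ∈ Set.Ioo (0:ℝ) 1, HasDerivAt ψ (W u * P u) u := by
    intro u hu
    have := (hWd u hu).mul (hφ' u hu)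
    rw [hψfun]
    refine this.congr_deriv ?_
    simp only [hPdef]; ring
  have hdψ : ∀ u ∈ Set.Ioo (0:ℝ) 1, deriv ψ u = W u * P u :=
    fun u hu => (hψd u hu).deriv
  -- second derivative
  have hd2 : ∀ u ∈ Set.Ioo (0:ℝ) 1,
      deriv (deriv ψ) u = W u * g u * P u + W u * (g' u * φ u + g u * φ' u + φ'' u) := by
    intro u hu
    have hev : deriv ψ =ᶠ[nhds u] (fun x => W x * P x) :=
      Filter.eventuallyEq_of_mem (isOpen_Ioo.mem_nhds hu) hdψ
    rw [hev.deriv_eq]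
    have hPd : HasDerivAt P (g' u * φ u + g u * φ' u + φ'' u) u :=
      ((hgd u hu).mul (hφ' u hu)).add (hφ'' u hu)
    exact ((hWd u hu).mul hPd).deriv
  -- the key algebraic identity
  have key : ∀ u ∈ Set.Ioo (0:ℝ) 1,
      u * (1-u) * deriv (deriv ψ) u + (4*a - 8*a*u) * deriv ψ u - 2*a*(6*a-1) * ψ u
      = W u / (u * (1-u)) *
        (u^2 * (1-u)^2 * φ'' u + 2*u*(a - u + (1-a)*u^2) * φ' u
          - a*(3*a-1)*(1-u)^2 * φ u) := by
    intro u hu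
    have hu0 : u ≠ 0 := hu.1.ne'
    have hu1 : (1:ℝ) - u ≠ 0 := by have := hu.2; intro h; nlinarith
    rw [hd2 u hu, hdψ u hu, hψ u]
    simp only [hPdef, hgdef, hg'def]
    have : u ^ (-a) * (1 - u) ^ (1 - 4*a) = W u := rfl
    rw [this]
    field_simp
    ring
  have hWne : ∀ u ∈ Set.Ioo (0:ℝ) 1, W u / (u * (1-u)) ≠ 0 := by
    intro u hu
    have hu0 : (0:ℝ) < u := hu.1
    have hu1 : (0:ℝ) < 1 - u := by linarith [hu.2]
    have : 0 < W u := mul_pos (Real.rpow_pos_of_pos hu0 _) (Real.rpow_pos_of_pos hu1 _)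
    positivity
  constructor
  · intro h u hu
    rw [key u hu, h u hu, mul_zero]
  · intro h u hu
    have := h u hu
    rw [key u hu] at this
    rcases mul_eq_zero.mp this with h1 | h2
    · exact absurd h1 (hWne u hu)
    · exact h2
end

section
/- The function φ(u) = (7/2)u^{3/2} − (7/2)u^{5/2} + u^{7/2} on (0,1) satisfies the ordinary differential equation u²(1−u)²φ''(u) + 2u(a − u + (1−a)u²)φ'(u) − a(3a−1)(1−u)²φ(u) = 0 with parameter a = 3/2, together with the boundary conditions φ(u) → 0 as u → 0+ and φ(u) → 1 as u → 1−. (This is the case b = 7/4, κ = 4/3.) -/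
open Set Filter

private lemma hd1 {u : ℝ} (hu : 0 < u) :
    HasDerivAt (fun u : ℝ => (7/2) * u ^ ((3:ℝ)/2) - (7/2) * u ^ ((5:ℝ)/2) + u ^ ((7:ℝ)/2))
      (21/4 * u ^ ((1:ℝ)/2) - 35/4 * u ^ ((3:ℝ)/2) + 7/2 * u ^ ((5:ℝ)/2)) u := by
  have h1 := (Real.hasDerivAt_rpow_const (x := u) (p := (3:ℝ)/2) (Or.inl hu.ne'))
  have h2 := (Real.hasDerivAt_rpow_const (x := u) (p := (5:ℝ)/2) (Or.inl hu.ne'))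
  have h3 := (Real.hasDerivAt_rpow_const (x := u) (p := (7:ℝ)/2) (Or.inl hu.ne'))
  have := ((h1.const_mul (7/2 : ℝ)).sub (h2.const_mul (7/2 : ℝ))).add h3
  refine this.congr_deriv ?_
  norm_num
  ring

private lemma hd2 {u : ℝ} (hu : 0 < u) :
    HasDerivAt (fun u : ℝ => 21/4 * u ^ ((1:ℝ)/2) - 35/4 * u ^ ((3:ℝ)/2) + 7/2 * u ^ ((5:ℝ)/2))
      (21/8 * u ^ (-(1:ℝ)/2) - 105/8 * u ^ ((1:ℝ)/2) + 35/4 * u ^ ((3:ℝ)/2)) u := by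
  have h1 := (Real.hasDerivAt_rpow_const (x := u) (p := (1:ℝ)/2) (Or.inl hu.ne'))
  have h2 := (Real.hasDerivAt_rpow_const (x := u) (p := (3:ℝ)/2) (Or.inl hu.ne'))
  have h3 := (Real.hasDerivAt_rpow_const (x := u) (p := (5:ℝ)/2) (Or.inl hu.ne'))
  have := ((h1.const_mul (21/4 : ℝ)).sub (h2.const_mul (35/4 : ℝ))).add (h3.const_mul (7/2 : ℝ))
  refine this.congr_deriv ?_
  norm_num
  ring

/-- `φ(u) = (7/2)u^{3/2} − (7/2)u^{5/2} + u^{7/2}` satisfies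
`u²(1−u)²φ'' + 2u(a − u + (1−a)u²)φ' − a(3a−1)(1−u)²φ = 0` on `(0,1)` with `a = 3/2`,
and `φ(u) → 0` as `u → 0+`, `φ(u) → 1` as `u → 1−`. -/
theorem statement9 (a : ℝ) (ha : a = 3/2) (φ : ℝ → ℝ)
    (hφ : ∀ u : ℝ, φ u = (7/2) * u ^ ((3:ℝ)/2) - (7/2) * u ^ ((5:ℝ)/2) + u ^ ((7:ℝ)/2)) :
    (∀ u ∈ Set.Ioo (0:ℝ) 1,
      u^2 * (1-u)^2 * deriv (deriv φ) u
        + 2*u*(a - u + (1-a)*u^2) * deriv φ u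
        - a*(3*a-1)*(1-u)^2 * φ u = 0) ∧
    Tendsto φ (nhdsWithin 0 (Set.Ioi 0)) (nhds 0) ∧
    Tendsto φ (nhdsWithin 1 (Set.Iio 1)) (nhds 1) := by
  have hφf : φ = fun u : ℝ => (7/2) * u ^ ((3:ℝ)/2) - (7/2) * u ^ ((5:ℝ)/2) + u ^ ((7:ℝ)/2) :=
    funext hφ
  have hderiv : ∀ u : ℝ, 0 < u →
      deriv φ u = 21/4 * u ^ ((1:ℝ)/2) - 35/4 * u ^ ((3:ℝ)/2) + 7/2 * u ^ ((5:ℝ)/2) := by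
    intro u hu
    rw [hφf]
    exact (hd1 hu).deriv
  refine ⟨?_, ?_, ?_⟩
  · intro u hu
    obtain ⟨hu0, hu1⟩ := hu
    have hderiv2 : deriv (deriv φ) u
        = 21/8 * u ^ (-(1:ℝ)/2) - 105/8 * u ^ ((1:ℝ)/2) + 35/4 * u ^ ((3:ℝ)/2) := by
      have hev : deriv φ =ᶠ[nhds u]
          (fun u : ℝ => 21/4 * u ^ ((1:ℝ)/2) - 35/4 * u ^ ((3:ℝ)/2) + 7/2 * u ^ ((5:ℝ)/2)) := by
        filter_upwards [Ioi_mem_nhds hu0] with x hx using hderiv x hx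
      rw [hev.deriv_eq]
      exact (hd2 hu0).deriv
    rw [hderiv2, hderiv u hu0, hφ u, ha]
    set s := u ^ ((1:ℝ)/2) with hs
    have hs0 : 0 < s := Real.rpow_pos_of_pos hu0 _
    have hsu : s ^ 2 = u := by
      rw [hs, ← Real.rpow_natCast (u ^ ((1:ℝ)/2)) 2, ← Real.rpow_mul hu0.le]
      norm_num
    have h3 : u ^ ((3:ℝ)/2) = s ^ 3 := by
      rw [hs, ← Real.rpow_natCast (u ^ ((1:ℝ)/2)) 3, ← Real.rpow_mul hu0.le]; norm_num
    have h5 : u ^ ((5:ℝ)/2) = s ^ 5 := by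
      rw [hs, ← Real.rpow_natCast (u ^ ((1:ℝ)/2)) 5, ← Real.rpow_mul hu0.le]; norm_num
    have h7 : u ^ ((7:ℝ)/2) = s ^ 7 := by
      rw [hs, ← Real.rpow_natCast (u ^ ((1:ℝ)/2)) 7, ← Real.rpow_mul hu0.le]; norm_num
    have hm : u ^ (-(1:ℝ)/2) = s⁻¹ := by
      rw [hs, ← Real.rpow_neg_one (u ^ ((1:ℝ)/2)), ← Real.rpow_mul hu0.le]; norm_num
    rw [h3, h5, h7, hm, ← hsu]
    field_simp
    ring
  · have hc : ContinuousAt φ 0 := by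
      rw [hφf]
      have c1 : ContinuousAt (fun u : ℝ => u ^ ((3:ℝ)/2)) 0 :=
        Real.continuousAt_rpow_const 0 _ (Or.inr (by norm_num))
      have c2 : ContinuousAt (fun u : ℝ => u ^ ((5:ℝ)/2)) 0 :=
        Real.continuousAt_rpow_const 0 _ (Or.inr (by norm_num))
      have c3 : ContinuousAt (fun u : ℝ => u ^ ((7:ℝ)/2)) 0 :=
        Real.continuousAt_rpow_const 0 _ (Or.inr (by norm_num))
      exact ((c1.const_smul (7/2:ℝ)).sub (c2.const_smul (7/2:ℝ))).add c3
    have h0 : φ 0 = 0 := by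
      rw [hφ]
      rw [Real.zero_rpow (by norm_num), Real.zero_rpow (by norm_num),
        Real.zero_rpow (by norm_num)]
      ring
    have := hc.continuousWithinAt (s := Set.Ioi 0)
    rw [ContinuousWithinAt, h0] at this
    exact this
  · have hc : ContinuousAt φ 1 := by
      rw [hφf]
      have c1 : ContinuousAt (fun u : ℝ => u ^ ((3:ℝ)/2)) 1 :=
        Real.continuousAt_rpow_const 1 _ (Or.inl one_ne_zero)
      have c2 : ContinuousAt (fun u : ℝ => u ^ ((5:ℝ)/2)) 1 :=
        Real.continuousAt_rpow_const 1 _ (Or.inl one_ne_zero)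
      have c3 : ContinuousAt (fun u : ℝ => u ^ ((7:ℝ)/2)) 1 :=
        Real.continuousAt_rpow_const 1 _ (Or.inl one_ne_zero)
      exact ((c1.const_smul (7/2:ℝ)).sub (c2.const_smul (7/2:ℝ))).add c3
    have h1 : φ 1 = 1 := by
      rw [hφ, Real.one_rpow, Real.one_rpow, Real.one_rpow]; ring
    have := hc.continuousWithinAt (s := Set.Iio 1)
    rw [ContinuousWithinAt, h1] at this
    exact this
end

section
/- Let a, b ∈ ℝ, T > 0, and let U : [0,T] → ℝ be continuous. Suppose G, H : [0,T] → ℝ are differentiable with G'(t) = a/(G(t) − U(t)) and H'(t) = a/(H(t) − U(t)) for all t, and U(t) < G(t) < H(t) for all t ∈ [0,T]. Suppose P, Q : [0,T] → ℝ are differentiable with P(0) = Q(0) = 1, P'(t) = −aP(t)/(G(t) − U(t))² and Q'(t) = −aQ(t)/(H(t) − U(t))². Then P(t) > 0 and Q(t) > 0 for all t, and for every t ∈ [0,T], (P(t)Q(t))^b / (H(t) − G(t))^{2b} = (H(0) − G(0))^{−2b} · exp{ −ab ∫₀ᵗ (1/(G(s) − U(s)) − 1/(H(s) − U(s)))² ds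 }. -/
open Set Filter MeasureTheory intervalIntegral

private lemma constIcc' {T : ℝ} {f : ℝ → ℝ}
    (h : ∀ t ∈ Set.Icc (0:ℝ) T, HasDerivWithinAt f 0 (Set.Icc 0 T) t) :
    ∀ t ∈ Set.Icc (0:ℝ) T, f t = f 0 := by
  apply constant_of_has_deriv_right_zero
  · exact fun t ht => (h t ht).continuousWithinAt
  · intro x hx
    exact (h x (Set.Ico_subset_Icc_self hx)).mono_of_mem_nhdsWithin
      (Icc_mem_nhdsGE_of_mem hx)

private lemma ode_exp' {T : ℝ} {c y : ℝ → ℝ} (hc : Continuous c)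
    (hy : ∀ t ∈ Set.Icc (0:ℝ) T, HasDerivWithinAt y (c t * y t) (Set.Icc 0 T) t) :
    ∀ t ∈ Set.Icc (0:ℝ) T, y t = y 0 * Real.exp (∫ s in (0:ℝ)..t, c s) := by
  set I : ℝ → ℝ := fun u => ∫ s in (0:ℝ)..u, c s with hIdef
  have hI' : ∀ t : ℝ, HasDerivAt I (c t) t := fun t =>
    (hc.integral_hasStrictDerivAt 0 t).hasDerivAt
  have hW : ∀ t ∈ Set.Icc (0:ℝ) T,
      HasDerivWithinAt (fun u => y u * Real.exp (-(I u))) 0 (Set.Icc 0 T) t := by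
    intro t ht
    have h1 := (hy t ht).mul (((hI' t).hasDerivWithinAt.neg).exp)
    exact h1.congr_deriv (by ring)
  have hconst := constIcc' hW
  intro t ht
  have ht' := hconst t ht
  have h0 : I 0 = 0 := intervalIntegral.integral_same
  simp only [h0, neg_zero, Real.exp_zero, mul_one] at ht'
  have hne : Real.exp (I t) ≠ 0 := (Real.exp_pos _).ne'
  rw [Real.exp_neg] at ht'
  field_simp at ht'
  rw [ht', mul_comm]

/-- pathwise identity for the chordal Loewner equation. If
`G' = a/(G − U)`, `H' = a/(H − U)` with `U < G < H` on `[0,T]`, and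
`P' = −aP/(G − U)²`, `Q' = −aQ/(H − U)²` with `P(0) = Q(0) = 1`, then `P, Q > 0` and
`(PQ)^b/(H − G)^{2b} = (H(0) − G(0))^{−2b} exp{−ab ∫₀ᵗ (1/(G−U) − 1/(H−U))² ds}`. -/
theorem statement10 (a b T : ℝ) (hT : 0 < T)
    (U G H P Q : ℝ → ℝ)
    (hU : ContinuousOn U (Set.Icc 0 T))
    (hG : ∀ t ∈ Set.Icc (0:ℝ) T,
      HasDerivWithinAt G (a / (G t - U t)) (Set.Icc 0 T) t)
    (hH : ∀ t ∈ Set.Icc (0:ℝ) T,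
      HasDerivWithinAt H (a / (H t - U t)) (Set.Icc 0 T) t)
    (hUG : ∀ t ∈ Set.Icc (0:ℝ) T, U t < G t)
    (hGH : ∀ t ∈ Set.Icc (0:ℝ) T, G t < H t)
    (hP0 : P 0 = 1) (hQ0 : Q 0 = 1)
    (hP : ∀ t ∈ Set.Icc (0:ℝ) T,
      HasDerivWithinAt P (-(a * P t) / (G t - U t)^2) (Set.Icc 0 T) t)
    (hQ : ∀ t ∈ Set.Icc (0:ℝ) T,
      HasDerivWithinAt Q (-(a * Q t) / (H t - U t)^2) (Set.Icc 0 T) t) :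
    (∀ t ∈ Set.Icc (0:ℝ) T, 0 < P t ∧ 0 < Q t) ∧
    (∀ t ∈ Set.Icc (0:ℝ) T,
      (P t * Q t) ^ b / (H t - G t) ^ (2*b)
        = (H 0 - G 0) ^ (-(2*b)) *
          Real.exp (-(a*b) *
            ∫ s in (0:ℝ)..t, (1/(G s - U s) - 1/(H s - U s))^2)) := by
  classical
  -- clamping map
  set π : ℝ → ℝ := fun s => min (max s 0) T with hπdef
  have hπc : Continuous π := (continuous_id.max continuous_const).min continuous_const
  have hπmem : ∀ s, π s ∈ Set.Icc (0:ℝ) T := fun s =>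
    ⟨le_min (le_max_right _ _) hT.le, min_le_right _ _⟩
  have hπid : ∀ s ∈ Set.Icc (0:ℝ) T, π s = s := by
    intro s hs
    simp [hπdef, max_eq_left hs.1, min_eq_left hs.2]
  have hGc : ContinuousOn G (Set.Icc 0 T) := fun t ht => (hG t ht).continuousWithinAt
  have hHc : ContinuousOn H (Set.Icc 0 T) := fun t ht => (hH t ht).continuousWithinAt
  -- clamped gap functions
  set g : ℝ → ℝ := fun s => G (π s) - U (π s) with hgdef
  set h : ℝ → ℝ := fun s => H (π s) - U (π s) with hhdef
  have hgc : Continuous g :=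
    (hGc.comp_continuous hπc hπmem).sub (hU.comp_continuous hπc hπmem)
  have hhc : Continuous h :=
    (hHc.comp_continuous hπc hπmem).sub (hU.comp_continuous hπc hπmem)
  have hgpos : ∀ s, 0 < g s := fun s => sub_pos.2 (hUG (π s) (hπmem s))
  have hhpos : ∀ s, 0 < h s := fun s =>
    sub_pos.2 ((hUG (π s) (hπmem s)).trans (hGH (π s) (hπmem s)))
  have hgs : ∀ s ∈ Set.Icc (0:ℝ) T, g s = G s - U s := by
    intro s hs; simp [hgdef, hπid s hs]
  have hhs : ∀ s ∈ Set.Icc (0:ℝ) T, h s = H s - U s := by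
    intro s hs; simp [hhdef, hπid s hs]
  -- coefficient functions
  set c₁ : ℝ → ℝ := fun s => -a / (g s)^2 with hc₁def
  set c₂ : ℝ → ℝ := fun s => -a / (h s)^2 with hc₂def
  set c₃ : ℝ → ℝ := fun s => -a / (g s * h s) with hc₃def
  have hc₁ : Continuous c₁ :=
    continuous_const.div (hgc.pow 2) (fun s => pow_ne_zero _ (hgpos s).ne')
  have hc₂ : Continuous c₂ :=
    continuous_const.div (hhc.pow 2) (fun s => pow_ne_zero _ (hhpos s).ne')
  have hc₃ : Continuous c₃ :=
    continuous_const.div (hgc.mul hhc)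
      (fun s => mul_ne_zero (hgpos s).ne' (hhpos s).ne')
  -- solve the three linear ODEs
  have hPe : ∀ t ∈ Set.Icc (0:ℝ) T, P t = Real.exp (∫ s in (0:ℝ)..t, c₁ s) := by
    have key := ode_exp' (T := T) (c := c₁) (y := P) hc₁ ?_
    · intro t ht; simpa [hP0] using key t ht
    · intro t ht
      have h1 := hP t ht
      have heq : c₁ t * P t = -(a * P t) / (G t - U t)^2 := by
        simp only [hc₁def]
        rw [hgs t ht]; ring
      rwa [← heq] at h1
  have hQe : ∀ t ∈ Set.Icc (0:ℝ) T, Q t = Real.exp (∫ s in (0:ℝ)..t, c₂ s) := by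
    have key := ode_exp' (T := T) (c := c₂) (y := Q) hc₂ ?_
    · intro t ht; simpa [hQ0] using key t ht
    · intro t ht
      have h1 := hQ t ht
      have heq : c₂ t * Q t = -(a * Q t) / (H t - U t)^2 := by
        simp only [hc₂def]
        rw [hhs t ht]; ring
      rwa [← heq] at h1
  have hDe : ∀ t ∈ Set.Icc (0:ℝ) T,
      H t - G t = (H 0 - G 0) * Real.exp (∫ s in (0:ℝ)..t, c₃ s) := by
    have key := ode_exp' (T := T) (c := c₃) (y := fun t => H t - G t) hc₃ ?_
    · intro t ht; simpa using key t ht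
    · intro t ht
      have h1 := (hH t ht).sub (hG t ht)
      have h2 : G t - U t ≠ 0 := (sub_pos.2 (hUG t ht)).ne'
      have h3 : H t - U t ≠ 0 :=
        (sub_pos.2 ((hUG t ht).trans (hGH t ht))).ne'
      have heq : c₃ t * (H t - G t) = a / (H t - U t) - a / (G t - U t) := by
        simp only [hc₃def]
        rw [hgs t ht, hhs t ht]
        field_simp
        ring
      rwa [← heq] at h1
  have hPpos : ∀ t ∈ Set.Icc (0:ℝ) T, 0 < P t := fun t ht =>
    (hPe t ht) ▸ Real.exp_pos _
  have hQpos : ∀ t ∈ Set.Icc (0:ℝ) T, 0 < Q t := fun t ht =>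
    (hQe t ht) ▸ Real.exp_pos _
  refine ⟨fun t ht => ⟨hPpos t ht, hQpos t ht⟩, ?_⟩
  intro t ht
  have h0T : (0:ℝ) ∈ Set.Icc (0:ℝ) T := ⟨le_refl _, hT.le⟩
  have hD0 : 0 < H 0 - G 0 := sub_pos.2 (hGH 0 h0T)
  set A : ℝ := ∫ s in (0:ℝ)..t, c₁ s with hA
  set B : ℝ := ∫ s in (0:ℝ)..t, c₂ s with hB
  set C : ℝ := ∫ s in (0:ℝ)..t, c₃ s with hC
  set V : ℝ := ∫ s in (0:ℝ)..t, (1/(G s - U s) - 1/(H s - U s))^2 with hV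
  -- combine the integrals
  have hcomb : A + B - 2*C = -a * V := by
    have hi₁ : IntervalIntegrable c₁ volume 0 t := hc₁.intervalIntegrable 0 t
    have hi₂ : IntervalIntegrable c₂ volume 0 t := hc₂.intervalIntegrable 0 t
    have hi₃ : IntervalIntegrable (fun s => 2 * c₃ s) volume 0 t :=
      (continuous_const.mul hc₃).intervalIntegrable 0 t
    have h1 : A + B - 2*C
        = ∫ s in (0:ℝ)..t, (c₁ s + c₂ s - 2 * c₃ s) := by
      rw [intervalIntegral.integral_sub (hi₁.add hi₂) hi₃,
        intervalIntegral.integral_add hi₁ hi₂,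
        intervalIntegral.integral_const_mul]
    have h2 : ∫ s in (0:ℝ)..t, (c₁ s + c₂ s - 2 * c₃ s)
        = ∫ s in (0:ℝ)..t, (-a) * (1/(G s - U s) - 1/(H s - U s))^2 := by
      apply intervalIntegral.integral_congr
      intro s hs
      have hsT : s ∈ Set.Icc (0:ℝ) T := by
        rw [Set.uIcc_of_le ht.1] at hs
        exact ⟨hs.1, hs.2.trans ht.2⟩
      have hg0 : g s ≠ 0 := (hgpos s).ne'
      have hh0 : h s ≠ 0 := (hhpos s).ne'
      simp only [hc₁def, hc₂def, hc₃def]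
      rw [← hgs s hsT, ← hhs s hsT]
      field_simp
      ring
    rw [h1, h2, intervalIntegral.integral_const_mul, ← hV]
  -- final rewriting
  rw [hPe t ht, hQe t ht, hDe t ht, ← Real.exp_add, ← Real.exp_mul,
    Real.mul_rpow hD0.le (Real.exp_pos _).le, ← Real.exp_mul,
    Real.rpow_neg hD0.le, div_mul_eq_div_div_swap, ← Real.exp_sub,
    div_eq_inv_mul]
  congr 1
  rw [Real.exp_eq_exp]
  simp only [hA, hB, hC] at hcomb
  linear_combination b * hcomb
end

section
/- Let A be a nonempty finite subset of ℤ², let z, w ∈ ∂A be distinct, and let η = [η_0, η_1, …, η_k] be a self-avoiding excursion in A from z to w (so η_0 = z, η_k = w, the points η_0,…,η_k are distinct, and η_1,…,η_{k−1} ∈ A). Then the sum of 4^{−|ω|} over all excursions ω in A from z to w whose chronological loop erasure equals η is 4^{−k} · Π_{j=1}^{k−1} q_{A_j}(η_j)^{−1}, where A_j = A ∖ {η_1,…,η_{j−1}} and q_B(x) is the probability that simple random walk started at x leaves B before returning to x, i.e., q_B(x) = 1 − Σ 4^{−|ω|}, the sum over loops in B rooted at x with θ(ω) = 1. -/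
open scoped ENNReal

/-- Nearest-neighbor adjacency on `ℤ²`. -/
def Adj (p q : ℤ × ℤ) : Prop := (p.1 - q.1).natAbs + (p.2 - q.2).natAbs = 1

/-- The outer boundary `∂A = {v ∉ A : dist(v,A) = 1}`. -/
def bdry (A : Set (ℤ × ℤ)) : Set (ℤ × ℤ) := {v | v ∉ A ∧ ∃ u ∈ A, Adj v u}

/-- `ω = [ω_0, …, ω_n]` is an excursion in `A` from `z` to `w`:
nearest-neighbor steps, `ω_0 = z`, `ω_n = w`, and `ω_1, …, ω_{n−1} ∈ A`. -/
def IsExcursion (A : Set (ℤ × ℤ)) (z w : ℤ × ℤ) (ω : List (ℤ × ℤ)) : Prop :=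
  2 ≤ ω.length ∧ ω.head? = some z ∧ ω.getLast? = some w ∧
    (∀ p ∈ ω.tail.dropLast, p ∈ A) ∧ List.Chain' Adj ω

/-- Loop in `B` rooted at `x`: `ω_0 = ω_n = x`, `n ≥ 2`, `ω_1,…,ω_n ∈ B`. -/
def IsLoopAt (B : Set (ℤ × ℤ)) (x : ℤ × ℤ) (ω : List (ℤ × ℤ)) : Prop :=
  3 ≤ ω.length ∧ ω.head? = some x ∧ ω.getLast? = some x ∧
    (∀ p ∈ ω.tail, p ∈ B) ∧ List.Chain' Adj ω

/-- The weight `4^{−|ω|}` of a path, where `|ω|` is the number of steps. -/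
noncomputable def pathWeight (ω : List (ℤ × ℤ)) : ℝ≥0∞ := (4 : ℝ≥0∞)⁻¹ ^ (ω.length - 1)

/-- `q_B(x)`: the probability that simple random walk from `x` leaves `B` before
returning to `x`, i.e. `1` minus the total weight of loops in `B` rooted at `x`
that return to `x` exactly once. -/
noncomputable def escProb (B : Set (ℤ × ℤ)) (x : ℤ × ℤ) : ℝ≥0∞ :=
  1 - ∑' ω : {ω : List (ℤ × ℤ) // IsLoopAt B x ω ∧ ω.tail.count x = 1}, pathWeight ω.val

/-- Chronological loop erasure, as a relation: `IsLE ω η` holds iff the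
loop erasure of `ω` is `η`. At each stage the path is split as `pre ++ ys`,
where `pre` runs from the current point `x` through its *last* occurrence
(`x ∉ ys`), and `x` is recorded. -/
inductive IsLE : List (ℤ × ℤ) → List (ℤ × ℤ) → Prop
  | nil : IsLE [] []
  | cons (x : ℤ × ℤ) (pre ys η : List (ℤ × ℤ)) :
      pre.head? = some x → pre.getLast? = some x → x ∉ ys → IsLE ys η →
      IsLE (pre ++ ys) (x :: η)

namespace S14
open List

variable {α : Type*}

lemma ne_nil_of_getLast? {l : List α} {x : α} (h : l.getLast? = some x) : l ≠ [] := by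
  rintro rfl; simp at h

lemma ne_nil_of_head? {l : List α} {x : α} (h : l.head? = some x) : l ≠ [] := by
  rintro rfl; simp at h

lemma mem_of_getLast?' {l : List α} {x : α} (h : l.getLast? = some x) : x ∈ l := by
  obtain ⟨h', rfl⟩ := List.mem_getLast?_eq_getLast h
  exact List.getLast_mem h'

lemma getLast?_cons_ne {a : α} {t : List α} (h : t ≠ []) :
    (a :: t).getLast? = t.getLast? := by
  obtain ⟨b, u, rfl⟩ := List.exists_cons_of_ne_nil h
  simp [List.getLast?_cons]

lemma dropLast_cons_ne {a : α} {t : List α} (h : t ≠ []) :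
    (a :: t).dropLast = a :: t.dropLast := by
  obtain ⟨b, u, rfl⟩ := List.exists_cons_of_ne_nil h
  rfl

lemma split_last {x : α} {p₁ y₁ p₂ y₂ : List α}
    (h : p₁ ++ y₁ = p₂ ++ y₂) (hp₁ : p₁.getLast? = some x) (hp₂ : p₂.getLast? = some x)
    (h₁ : x ∉ y₁) (h₂ : x ∉ y₂) : p₁ = p₂ ∧ y₁ = y₂ := by
  rcases List.append_eq_append_iff.1 h with ⟨a, rfl, rfl⟩ | ⟨a, rfl, rfl⟩
  · rcases eq_or_ne a [] with rfl | ha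
    · simp
    · rw [List.getLast?_append_of_ne_nil _ ha] at hp₂
      exact absurd (List.mem_append_left _ (mem_of_getLast?' hp₂)) h₁
  · rcases eq_or_ne a [] with rfl | ha
    · simp
    · rw [List.getLast?_append_of_ne_nil _ ha] at hp₁
      exact absurd (List.mem_append_left _ (mem_of_getLast?' hp₁)) h₂

lemma split_first {x : α} {p₁ y₁ p₂ y₂ : List α}
    (h : p₁ ++ y₁ = p₂ ++ y₂) (hp₁ : x ∉ p₁) (hp₂ : x ∉ p₂)
    (h₁ : y₁.head? = some x) (h₂ : y₂.head? = some x) : p₁ = p₂ ∧ y₁ = y₂ := by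
  rcases List.append_eq_append_iff.1 h with ⟨a, rfl, rfl⟩ | ⟨a, rfl, rfl⟩
  · rcases eq_or_ne a [] with rfl | ha
    · simp
    · obtain ⟨c, u, rfl⟩ := List.exists_cons_of_ne_nil ha
      rw [List.head?_append] at h₁
      simp only [List.head?_cons, Option.or_some] at h₁
      obtain rfl : c = x := by injection h₁
      exact absurd (List.mem_append_right _ (List.mem_cons_self)) hp₂
  · rcases eq_or_ne a [] with rfl | ha
    · simp
    · obtain ⟨c, u, rfl⟩ := List.exists_cons_of_ne_nil ha
      rw [List.head?_append] at h₂
      simp only [List.head?_cons, Option.or_some] at h₂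
      obtain rfl : c = x := by injection h₂
      exact absurd (List.mem_append_right _ (List.mem_cons_self)) hp₁

lemma adj_irrefl (x : ℤ × ℤ) : ¬ Adj x x := by simp [Adj]

lemma pathWeight_append {a b : List (ℤ × ℤ)} (ha : a ≠ []) (hb : b ≠ []) :
    pathWeight (a ++ b) = pathWeight a * 4⁻¹ * pathWeight b := by
  have ha' := List.length_pos_iff.2 ha
  have hb' := List.length_pos_iff.2 hb
  unfold pathWeight
  rw [List.length_append, show a.length + b.length - 1
      = (a.length - 1) + 1 + (b.length - 1) by omega, pow_add, pow_add, pow_one]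

lemma pathWeight_append_tail {a b : List (ℤ × ℤ)} (ha : a ≠ []) :
    pathWeight (a ++ b.tail) = pathWeight a * pathWeight b := by
  have ha' := List.length_pos_iff.2 ha
  unfold pathWeight
  rw [List.length_append, List.length_tail, show a.length + (b.length - 1) - 1
      = (a.length - 1) + (b.length - 1) by omega, pow_add]

lemma pathWeight_cons {z : ℤ × ℤ} {b : List (ℤ × ℤ)} (hb : b ≠ []) :
    pathWeight (z :: b) = 4⁻¹ * pathWeight b := by
  have hb' := List.length_pos_iff.2 hb
  unfold pathWeight
  rw [List.length_cons, show b.length + 1 - 1 = 1 + (b.length - 1) by omega, pow_add, pow_one]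


abbrev Pt := ℤ × ℤ

/-- loop-or-trivial path at `x` with interior in `B`. -/
def LoopPre (B : Set Pt) (x : Pt) (l : List Pt) : Prop :=
  l.head? = some x ∧ l.getLast? = some x ∧ (∀ p ∈ l.tail, p ∈ B) ∧ List.Chain' Adj l

noncomputable def loopSum (B : Set Pt) (x : Pt) : ℝ≥0∞ :=
  ∑' l : {l : List Pt // LoopPre B x l ∧ l.tail.count x = 1}, pathWeight l.val

lemma escProb_eq (B : Set Pt) (x : Pt) : escProb B x = 1 - loopSum B x := by
  have hiff : ∀ l : List Pt,
      (IsLoopAt B x l ∧ l.tail.count x = 1) ↔ (LoopPre B x l ∧ l.tail.count x = 1) := by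
    intro l
    constructor
    · rintro ⟨⟨_, h2, h3, h4, h5⟩, h6⟩; exact ⟨⟨h2, h3, h4, h5⟩, h6⟩
    · rintro ⟨⟨h2, h3, h4, h5⟩, h6⟩
      refine ⟨⟨?_, h2, h3, h4, h5⟩, h6⟩
      have hl : l = x :: l.tail := List.eq_cons_of_mem_head? h2
      have ht : l.tail ≠ [] := by
        intro e; rw [e] at h6; simp at h6
      obtain ⟨b, u, hu⟩ := List.exists_cons_of_ne_nil ht
      rcases u with _ | ⟨c, v⟩
      · exfalso
        have hxb : b = x := by
          rw [hl, hu] at h3; simpa using h3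
        have : Adj x b := by
          rw [hl, hu] at h5
          exact (List.isChain_cons_cons.1 h5).1
        rw [hxb] at this
        exact adj_irrefl x this
      · rw [hl, hu]; simp
  calc escProb B x
      = 1 - ∑' l : {l : List Pt // IsLoopAt B x l ∧ l.tail.count x = 1}, pathWeight l.val := rfl
    _ = 1 - loopSum B x := by
        rw [show (∑' l : {l : List Pt // IsLoopAt B x l ∧ l.tail.count x = 1}, pathWeight l.val)
          = loopSum B x from
          (Equiv.subtypeEquivRight hiff).tsum_eq (fun l : {l : List Pt // LoopPre B x l ∧ l.tail.count x = 1} => pathWeight l.val)]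

lemma loopPre_singleton (B : Set Pt) (x : Pt) : LoopPre B x [x] :=
  ⟨rfl, rfl, by simp, List.isChain_singleton x⟩

lemma loopPre_count_zero {B : Set Pt} {x : Pt} {l : List Pt}
    (h : LoopPre B x l) (hc : l.tail.count x = 0) : l = [x] := by
  have hl : l = x :: l.tail := List.eq_cons_of_mem_head? h.1
  rcases eq_or_ne l.tail [] with ht | ht
  · rw [hl, ht]
  · exfalso
    have h3 := h.2.1
    rw [hl, getLast?_cons_ne ht] at h3
    have hx : x ∈ l.tail := mem_of_getLast?' h3
    rw [List.count_eq_zero] at hc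
    exact hc hx

/-- shape of a single-return loop: `x :: (u ++ [x])` with `x ∉ u`. -/
lemma loopPre_one_shape {B : Set Pt} {x : Pt} {l : List Pt}
    (h : LoopPre B x l) (hc : l.tail.count x = 1) :
    ∃ u, x ∉ u ∧ l = x :: (u ++ [x]) := by
  have hl : l = x :: l.tail := List.eq_cons_of_mem_head? h.1
  have ht : l.tail ≠ [] := by intro e; rw [e] at hc; simp at hc
  have hlast : l.tail.getLast? = some x := by
    have h3 := h.2.1
    rwa [hl, getLast?_cons_ne ht] at h3
  have hsplit : l.tail.dropLast ++ [x] = l.tail := List.dropLast_append_getLast? x hlast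
  refine ⟨l.tail.dropLast, ?_, ?_⟩
  · rw [← hsplit, List.count_append] at hc
    simp only [List.count_singleton] at hc
    have : l.tail.dropLast.count x = 0 := by
      simp at hc; omega
    exact List.count_eq_zero.1 this
  · rw [hsplit, ← hl]

lemma tsum_loopPre_count (B : Set Pt) (x : Pt) :
    ∀ m : ℕ, (∑' l : {l : List Pt // LoopPre B x l ∧ l.tail.count x = m}, pathWeight l.val)
      = (loopSum B x) ^ m := by
  intro m
  induction m with
  | zero =>
    rw [pow_zero,
      tsum_eq_single (⟨[x], loopPre_singleton B x, by simp⟩ :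
        {l : List Pt // LoopPre B x l ∧ l.tail.count x = 0})
      (fun b' hb' => absurd (Subtype.ext (loopPre_count_zero b'.2.1 b'.2.2)) hb')]
    simp [pathWeight]
  | succ m IH =>
    have hg : ∀ (l1 l2 : List Pt), (LoopPre B x l1 ∧ l1.tail.count x = 1) →
        (LoopPre B x l2 ∧ l2.tail.count x = m) →
        LoopPre B x (l1 ++ l2.tail) ∧ (l1 ++ l2.tail).tail.count x = m + 1 := by
      rintro l1 l2 ⟨⟨h1h, h1l, h1B, h1c⟩, h1n⟩ ⟨⟨h2h, h2l, h2B, h2c⟩, h2n⟩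
      have hl1ne : l1 ≠ [] := ne_nil_of_head? h1h
      have hl2 : l2 = x :: l2.tail := List.eq_cons_of_mem_head? h2h
      have htail : (l1 ++ l2.tail).tail = l1.tail ++ l2.tail :=
        List.tail_append_of_ne_nil hl1ne
      have hadj : ∀ y ∈ l2.tail.head?, Adj x y := by
        have := h2c
        rw [hl2] at this
        exact (List.isChain_cons.1 this).1
      refine ⟨⟨?_, ?_, ?_, ?_⟩, ?_⟩
      · rw [List.head?_append, h1h]; rfl
      · rcases eq_or_ne l2.tail [] with he | he
        · rw [he, List.append_nil]; exact h1l
        · rw [List.getLast?_append_of_ne_nil _ he]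
          rw [hl2, getLast?_cons_ne he] at h2l
          exact h2l
      · rw [htail]
        intro p hp
        rcases List.mem_append.1 hp with hp | hp
        · exact h1B p hp
        · exact h2B p hp
      · refine List.isChain_append.2 ⟨h1c, h2c.tail, ?_⟩
        intro a ha b hb
        rw [h1l] at ha
        obtain rfl : x = a := by simpa using ha
        exact hadj b hb
      · rw [htail, List.count_append, h1n, h2n]; omega
    set p := loopSum B x with hp_def
    let g : {l : List Pt // LoopPre B x l ∧ l.tail.count x = 1} ×
          {l : List Pt // LoopPre B x l ∧ l.tail.count x = m} →
          {l : List Pt // LoopPre B x l ∧ l.tail.count x = m + 1} :=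
      fun ab => ⟨ab.1.val ++ ab.2.val.tail, hg ab.1.val ab.2.val ab.1.2 ab.2.2⟩
    have hinj : Function.Injective g := by
      rintro ⟨⟨l1, h1⟩, ⟨l2, h2⟩⟩ ⟨⟨l1', h1'⟩, ⟨l2', h2'⟩⟩ heq
      have heq' : l1 ++ l2.tail = l1' ++ l2'.tail := congrArg Subtype.val heq
      obtain ⟨u, hu, huu⟩ := loopPre_one_shape h1.1 h1.2
      obtain ⟨u', hu', huu'⟩ := loopPre_one_shape h1'.1 h1'.2
      have hl2 : l2 = x :: l2.tail := List.eq_cons_of_mem_head? h2.1.1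
      have hl2' : l2' = x :: l2'.tail := List.eq_cons_of_mem_head? h2'.1.1
      rw [huu, huu'] at heq'
      have heq2 : u ++ (x :: l2.tail) = u' ++ (x :: l2'.tail) := by
        simpa [List.append_assoc] using heq'
      rw [← hl2, ← hl2'] at heq2
      obtain ⟨he1, he2⟩ := split_first heq2 hu hu'
        (by rw [hl2]; rfl) (by rw [hl2']; rfl)
      have hl1eq : l1 = l1' := by rw [huu, huu', he1]
      simp only [Prod.mk.injEq, Subtype.mk.injEq]
      exact ⟨hl1eq, he2⟩
    have hsurj : Function.Surjective g := by
      rintro ⟨l, hLP, hc⟩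
      have hl : l = x :: l.tail := List.eq_cons_of_mem_head? hLP.1
      have hxmem : x ∈ l.tail := by
        refine List.count_pos_iff.1 ?_
        rw [hc]; exact Nat.succ_pos m
      have htne : l.tail ≠ [] := by intro e; rw [e] at hxmem; simp at hxmem
      set P : Pt → Bool := fun q => q != x with hP
      set u := l.tail.takeWhile P with hu_def
      have hur : u ++ l.tail.dropWhile P = l.tail := List.takeWhile_append_dropWhile
      have hxu : x ∉ u := by
        intro hx; have := List.mem_takeWhile_imp hx; simp [hP] at this
      have hucount : u.count x = 0 := List.count_eq_zero.2 hxu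
      have hrne : l.tail.dropWhile P ≠ [] := by
        intro e; rw [e, List.append_nil] at hur; rw [hur] at hxu; exact hxu hxmem
      obtain ⟨c, r', hr⟩ := List.exists_cons_of_ne_nil hrne
      have hcx : c = x := by
        have h5 := List.head?_dropWhile_not P l.tail
        rw [hr] at h5
        simpa [hP] using h5
      rw [hcx] at hr
      have htail_eq : u ++ (x :: r') = l.tail := by rw [← hr]; exact hur
      have hl_eq : l = (x :: (u ++ [x])) ++ r' := by
        conv_lhs => rw [hl, ← htail_eq]
        simp
      have hxB : x ∈ B := hLP.2.2.1 x hxmem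
      have huB : ∀ q ∈ u, q ∈ B := fun q hq =>
        hLP.2.2.1 q (htail_eq ▸ List.mem_append_left _ hq)
      have hrB : ∀ q ∈ r', q ∈ B := fun q hq =>
        hLP.2.2.1 q (htail_eq ▸ List.mem_append_right _ (List.mem_cons_of_mem _ hq))
      have htlast : l.tail.getLast? = some x := by
        have h3 := hLP.2.1
        rwa [hl, getLast?_cons_ne htne] at h3
      have hl2last : (x :: r').getLast? = some x := by
        rw [← List.getLast?_append_of_ne_nil u (List.cons_ne_nil x r'), htail_eq]
        exact htlast
      have hch := hLP.2.2.2
      have hl1chain : List.Chain' Adj (x :: (u ++ [x])) :=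
        hch.prefix ⟨r', hl_eq.symm⟩
      have hl2chain : List.Chain' Adj (x :: r') :=
        hch.suffix ⟨x :: u, by rw [hl, ← htail_eq]; simp⟩
      have hccount : r'.count x = m := by
        have h6 : l.tail.count x = m + 1 := hc
        rw [← htail_eq, List.count_append, hucount] at h6
        simp [List.count_cons] at h6
        omega
      have h1 : LoopPre B x (x :: (u ++ [x])) ∧ (x :: (u ++ [x])).tail.count x = 1 := by
        refine ⟨⟨rfl, ?_, ?_, hl1chain⟩, ?_⟩
        · rw [show x :: (u ++ [x]) = (x :: u) ++ [x] by simp]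
          exact List.getLast?_concat
        · intro q hq
          simp only [List.tail_cons] at hq
          rcases List.mem_append.1 hq with hq | hq
          · exact huB q hq
          · simp at hq; rw [hq]; exact hxB
        · simp [List.count_append, hucount]
      have h2 : LoopPre B x (x :: r') ∧ (x :: r').tail.count x = m := by
        refine ⟨⟨rfl, hl2last, ?_, hl2chain⟩, ?_⟩
        · intro q hq
          simp only [List.tail_cons] at hq
          exact hrB q hq
        · simpa using hccount
      refine ⟨⟨⟨x :: (u ++ [x]), h1⟩, ⟨x :: r', h2⟩⟩, ?_⟩
      apply Subtype.ext
      exact hl_eq.symm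
    have hbij : Function.Bijective g := ⟨hinj, hsurj⟩
    calc (∑' l : {l : List Pt // LoopPre B x l ∧ l.tail.count x = m + 1}, pathWeight l.val)
        = ∑' ab, pathWeight ((Equiv.ofBijective g hbij) ab).val :=
          ((Equiv.ofBijective g hbij).tsum_eq _).symm
      _ = ∑' (ab : {l : List Pt // LoopPre B x l ∧ l.tail.count x = 1} ×
            {l : List Pt // LoopPre B x l ∧ l.tail.count x = m}),
            pathWeight ab.1.val * pathWeight ab.2.val := by
          refine tsum_congr ?_
          rintro ⟨⟨l1, hh1⟩, ⟨l2, hh2⟩⟩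
          exact pathWeight_append_tail (ne_nil_of_head? hh1.1.1)
      _ = p * p ^ m := by
          rw [ENNReal.tsum_prod']
          have hinner : ∀ a : {l : List Pt // LoopPre B x l ∧ l.tail.count x = 1},
              (∑' b : {l : List Pt // LoopPre B x l ∧ l.tail.count x = m},
                pathWeight a.val * pathWeight b.val) = pathWeight a.val * p ^ m := by
            intro a; rw [ENNReal.tsum_mul_left, IH]
          rw [tsum_congr hinner, ENNReal.tsum_mul_right, hp_def]
          rfl
      _ = p ^ (m + 1) := (pow_succ' p m).symm

lemma tsum_loopPre (B : Set Pt) (x : Pt) :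
    (∑' l : {l : List Pt // LoopPre B x l}, pathWeight l.val) = (escProb B x)⁻¹ := by
  rw [escProb_eq]
  rw [← (Equiv.sigmaFiberEquiv (fun l : {l : List Pt // LoopPre B x l} =>
    l.val.tail.count x)).tsum_eq (fun l : {l : List Pt // LoopPre B x l} => pathWeight l.val)]
  rw [ENNReal.tsum_sigma']
  have h2 : ∀ m : ℕ,
      (∑' b : {l' : {l : List Pt // LoopPre B x l} // l'.val.tail.count x = m},
        pathWeight b.val.val) = (loopSum B x) ^ m := by
    intro m
    rw [← tsum_loopPre_count B x m]
    exact
      ((⟨fun q => ⟨⟨q.1, q.2.1⟩, q.2.2⟩, fun q => ⟨q.1.1, q.1.2, q.2⟩,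
        fun _ => rfl, fun _ => rfl⟩ :
        {l : List Pt // LoopPre B x l ∧ l.tail.count x = m} ≃
        {l' : {l : List Pt // LoopPre B x l} // l'.val.tail.count x = m}).tsum_eq
        (fun b => pathWeight b.val.val)).symm
  have h3 : ∀ a : ℕ,
      (∑' b : {l' : {l : List Pt // LoopPre B x l} // l'.val.tail.count x = a},
        pathWeight ((Equiv.sigmaFiberEquiv (fun l : {l : List Pt // LoopPre B x l} =>
          l.val.tail.count x)) ⟨a, b⟩).val) = (loopSum B x) ^ a := fun a => h2 a
  rw [tsum_congr h3, ENNReal.tsum_geometric]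

/-- path ending at `w` with all points but the last in `B`. -/
def TailWalk (B : Set Pt) (w : Pt) (l : List Pt) : Prop :=
  l ≠ [] ∧ l.getLast? = some w ∧ (∀ p ∈ l.dropLast, p ∈ B) ∧ List.Chain' Adj l

lemma isLE_head_eq {ω η : List Pt} (h : IsLE ω η) : ω.head? = η.head? := by
  cases h with
  | nil => rfl
  | cons x pre ys η h1 h2 h3 h4 =>
    rw [List.head?_append, h1]; rfl

lemma isLE_ne_nil {ω η : List Pt} (h : IsLE ω η) (hη : η ≠ []) : ω ≠ [] := by
  cases h with
  | nil => exact absurd rfl hη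
  | cons x pre ys η h1 h2 h3 h4 =>
    simp [ne_nil_of_head? h1]

noncomputable def G : Set Pt → List Pt → ℝ≥0∞
  | _, [] => 1
  | _, [_] => 1
  | B, x :: y :: t => (escProb B x)⁻¹ * (4⁻¹ * G (B \ {x}) (y :: t))

lemma G_cons (B : Set Pt) (x : Pt) {η : List Pt} (h : η ≠ []) :
    G B (x :: η) = (escProb B x)⁻¹ * (4⁻¹ * G (B \ {x}) η) := by
  obtain ⟨y, t, rfl⟩ := List.exists_cons_of_ne_nil h
  rfl

lemma key (η : List Pt) : ∀ (B : Set Pt) (w : Pt),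
    η.getLast? = some w → η.Nodup → List.Chain' Adj η →
    (∀ p ∈ η.dropLast, p ∈ B) → w ∉ B → η ≠ [] →
    (∑' l : {l : List Pt // TailWalk B w l ∧ IsLE l η}, pathWeight l.val) = G B η := by
  induction η with
  | nil => intro B w _ _ _ _ _ h; exact absurd rfl h
  | cons x η' IH =>
    intro B w hlast hnd hch hdrop hwB _
    rcases eq_or_ne η' [] with rfl | hη'
    · -- base case: η = [x] with x = w
      obtain rfl : x = w := by simpa using hlast
      have hwB' : x ∉ B := hwB
      have hmem : TailWalk B x [x] ∧ IsLE [x] [x] := by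
        refine ⟨⟨by simp, rfl, by simp, List.isChain_singleton x⟩, ?_⟩
        exact IsLE.cons x [x] [] [] rfl rfl List.not_mem_nil IsLE.nil
      rw [tsum_eq_single (⟨[x], hmem⟩ :
          {l : List Pt // TailWalk B x l ∧ IsLE l [x]}) ?_]
      · simp [pathWeight, G]
      · rintro ⟨l, htw, hle⟩ hne
        exfalso
        apply hne
        apply Subtype.ext
        show l = [x]
        cases hle with
        | cons x pre ys η h1 h2 h3 h4 =>
          cases h4 with
          | nil =>
            rw [List.append_nil]
            rw [List.append_nil] at htw
            have hpre : pre = x :: pre.tail := List.eq_cons_of_mem_head? h1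
            rcases eq_or_ne pre.tail [] with he | he
            · rw [hpre, he]
            · exfalso
              have hdl : pre.dropLast = x :: pre.tail.dropLast := by
                conv_lhs => rw [hpre]
                exact dropLast_cons_ne he
              have hwdl : x ∈ pre.dropLast := by rw [hdl]; exact List.mem_cons_self
              exact hwB' (htw.2.2.1 x hwdl)
    · -- inductive step
      have hηdl : (x :: η').dropLast = x :: η'.dropLast := dropLast_cons_ne hη'
      have hxB : x ∈ B := hdrop x (by rw [hηdl]; exact List.mem_cons_self)
      have hxw : x ≠ w := fun h => hwB (h ▸ hxB)
      have hlast' : η'.getLast? = some w := by rwa [getLast?_cons_ne hη'] at hlast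
      have hxη' : x ∉ η' := (List.nodup_cons.1 hnd).1
      have hdrop' : ∀ p ∈ η'.dropLast, p ∈ B \ {x} := by
        intro p hp
        refine ⟨hdrop p (by rw [hηdl]; exact List.mem_cons_of_mem _ hp), ?_⟩
        simp only [Set.mem_singleton_iff]
        intro he
        exact hxη' (he ▸ (List.dropLast_sublist η').subset hp)
      have hIH := IH (B \ {x}) w hlast' (List.nodup_cons.1 hnd).2 hch.tail hdrop'
        (fun hc => hwB hc.1) hη'
      have hheadη' : ∀ y ∈ η'.head?, Adj x y := (List.isChain_cons.1 hch).1
      have hxys : ∀ {ys : List Pt}, TailWalk (B \ {x}) w ys → x ∉ ys := by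
        intro ys htw hx
        have hsplit := List.dropLast_append_getLast? w htw.2.1
        rw [← hsplit] at hx
        rcases List.mem_append.1 hx with h | h
        · exact (htw.2.2.1 x h).2 rfl
        · simp at h; exact hxw h
      have hg : ∀ (pre ys : List Pt), LoopPre B x pre →
          (TailWalk (B \ {x}) w ys ∧ IsLE ys η') →
          TailWalk B w (pre ++ ys) ∧ IsLE (pre ++ ys) (x :: η') := by
        rintro pre ys ⟨hph, hpl, hpB, hpc⟩ ⟨⟨hyne, hyl, hyB, hyc⟩, hyle⟩
        have hpne : pre ≠ [] := ne_nil_of_head? hph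
        have hyhead : ys.head? = η'.head? := isLE_head_eq hyle
        refine ⟨⟨by simp [hpne], by rw [List.getLast?_append_of_ne_nil _ hyne]; exact hyl,
          ?_, ?_⟩, ?_⟩
        · rw [List.dropLast_append_of_ne_nil hyne]
          intro p hp
          rcases List.mem_append.1 hp with hp | hp
          · have hpre : pre = x :: pre.tail := List.eq_cons_of_mem_head? hph
            rw [hpre] at hp
            rcases hp with _ | hp
            · exact hxB
            · exact hpB p (by assumption)
          · exact (hyB p hp).1
        · refine List.isChain_append.2 ⟨hpc, hyc, ?_⟩
          intro a ha b hb
          rw [hpl] at ha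
          obtain rfl : x = a := by simpa using ha
          rw [hyhead] at hb
          exact hheadη' b hb
        · exact IsLE.cons x pre ys η' hph hpl (hxys ⟨hyne, hyl, hyB, hyc⟩) hyle
      let g : {l : List Pt // LoopPre B x l} ×
            {l : List Pt // TailWalk (B \ {x}) w l ∧ IsLE l η'} →
            {l : List Pt // TailWalk B w l ∧ IsLE l (x :: η')} :=
        fun ab => ⟨ab.1.val ++ ab.2.val, hg ab.1.val ab.2.val ab.1.2 ab.2.2⟩
      have hinj : Function.Injective g := by
        rintro ⟨⟨p1, hp1⟩, ⟨y1, hy1⟩⟩ ⟨⟨p2, hp2⟩, ⟨y2, hy2⟩⟩ heq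
        have heq' : p1 ++ y1 = p2 ++ y2 := congrArg Subtype.val heq
        obtain ⟨e1, e2⟩ := split_last heq' hp1.2.1 hp2.2.1 (hxys hy1.1) (hxys hy2.1)
        simp only [Prod.mk.injEq, Subtype.mk.injEq]
        exact ⟨e1, e2⟩
      have hsurj : Function.Surjective g := by
        rintro ⟨l, htw, hle⟩
        cases hle with
        | cons x' pre ys η'' h1 h2 h3 h4 =>
          have hyne : ys ≠ [] := isLE_ne_nil h4 hη'
          have hpne : pre ≠ [] := ne_nil_of_head? h1
          have hdl : (pre ++ ys).dropLast = pre ++ ys.dropLast :=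
            List.dropLast_append_of_ne_nil hyne
          refine ⟨⟨⟨pre, h1, h2, ?_, htw.2.2.2.prefix ⟨ys, rfl⟩⟩,
            ⟨ys, ⟨⟨hyne, ?_, ?_, htw.2.2.2.suffix ⟨pre, rfl⟩⟩, h4⟩⟩⟩, rfl⟩
          · intro p hp
            have hp' : p ∈ (pre ++ ys).dropLast := by
              rw [hdl]; exact List.mem_append_left _ (List.mem_of_mem_tail hp)
            exact htw.2.2.1 p hp'
          · have h5 := htw.2.1
            rwa [List.getLast?_append_of_ne_nil _ hyne] at h5
          · intro p hp
            refine ⟨htw.2.2.1 p (by rw [hdl]; exact List.mem_append_right _ hp), ?_⟩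
            simp only [Set.mem_singleton_iff]
            intro he
            exact h3 (he ▸ (List.dropLast_sublist ys).subset hp)
      have hbij : Function.Bijective g := ⟨hinj, hsurj⟩
      calc (∑' l : {l : List Pt // TailWalk B w l ∧ IsLE l (x :: η')}, pathWeight l.val)
          = ∑' ab, pathWeight ((Equiv.ofBijective g hbij) ab).val :=
            ((Equiv.ofBijective g hbij).tsum_eq _).symm
        _ = ∑' (ab : {l : List Pt // LoopPre B x l} ×
              {l : List Pt // TailWalk (B \ {x}) w l ∧ IsLE l η'}),
              pathWeight ab.1.val * 4⁻¹ * pathWeight ab.2.val := by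
            refine tsum_congr ?_
            rintro ⟨⟨p1, hp1⟩, ⟨y1, hy1⟩⟩
            exact pathWeight_append (ne_nil_of_head? hp1.1) hy1.1.1
        _ = (escProb B x)⁻¹ * (4⁻¹ * G (B \ {x}) η') := by
            rw [ENNReal.tsum_prod']
            have hinner : ∀ a : {l : List Pt // LoopPre B x l},
                (∑' b : {l : List Pt // TailWalk (B \ {x}) w l ∧ IsLE l η'},
                  pathWeight a.val * 4⁻¹ * pathWeight b.val)
                = pathWeight a.val * (4⁻¹ * G (B \ {x}) η') := by
              intro a
              rw [ENNReal.tsum_mul_left, hIH, mul_assoc]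
            rw [tsum_congr hinner, ENNReal.tsum_mul_right, tsum_loopPre]
        _ = G B (x :: η') := (G_cons B x hη').symm

lemma G_eq (z : Pt) : ∀ (l : List Pt) (B : Set Pt),
    G B l = 4⁻¹ ^ (l.length - 1) *
      ∏ j ∈ Finset.range (l.length - 1),
        (escProb (B \ {p | p ∈ l.take j}) (l.getD j z))⁻¹ := by
  intro l
  induction l with
  | nil => intro B; simp [G]
  | cons x t IH =>
    intro B
    rcases eq_or_ne t [] with rfl | ht
    · simp [G]
    · have htpos := List.length_pos_iff.2 ht
      rw [G_cons B x ht, IH (B \ {x})]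
      have hlen : (x :: t).length - 1 = (t.length - 1) + 1 := by
        simp only [List.length_cons]; omega
      rw [hlen, Finset.prod_range_succ']
      have hterm : ∀ j,
          (escProb (B \ {p | p ∈ (x :: t).take (j + 1)}) ((x :: t).getD (j + 1) z))⁻¹
          = (escProb ((B \ {x}) \ {p | p ∈ t.take j}) (t.getD j z))⁻¹ := by
        intro j
        have hset : B \ {p | p ∈ (x :: t).take (j + 1)}
            = (B \ {x}) \ {p | p ∈ t.take j} := by
          rw [List.take_succ_cons]
          ext q
          simp only [Set.mem_diff, Set.mem_setOf_eq, List.mem_cons, Set.mem_singleton_iff]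
          tauto
        rw [hset, List.getD_cons_succ]
      rw [Finset.prod_congr rfl (fun j _ => hterm j)]
      have h00 : (escProb (B \ {p | p ∈ (x :: t).take 0}) ((x :: t).getD 0 z))⁻¹
          = (escProb B x)⁻¹ := by
        have hset : B \ {p | p ∈ (x :: t).take 0} = B := by
          ext q; simp
        rw [hset, List.getD_cons_zero]
      rw [h00, pow_succ]
      ring

end S14

open S14

/-- for a finite nonempty `A ⊆ ℤ²`, distinct `z, w ∈ ∂A`, and a
self-avoiding excursion `η = [η_0, …, η_k]` in `A` from `z` to `w`, the total
weight of excursions in `A` from `z` to `w` whose chronological loop erasure is `η`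
equals `4^{−k} Π_{j=1}^{k−1} q_{A_j}(η_j)^{−1}`, where `A_j = A ∖ {η_1,…,η_{j−1}}`. -/
theorem statement14 (A : Set (ℤ × ℤ)) (hfin : A.Finite) (hne : A.Nonempty)
    (z w : ℤ × ℤ) (hz : z ∈ bdry A) (hw : w ∈ bdry A) (hzw : z ≠ w)
    (η : List (ℤ × ℤ)) (k : ℕ) (hk : η.length = k + 1)
    (hexc : IsExcursion A z w η) (hsa : η.Nodup) :
    (∑' ω : {ω : List (ℤ × ℤ) // IsExcursion A z w ω ∧ IsLE ω η}, pathWeight ω.val)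
      = (4 : ℝ≥0∞)⁻¹ ^ k *
        ∏ j ∈ Finset.Ico 1 k,
          (escProb (A \ {p | p ∈ η.tail.take (j - 1)}) (η.getD j z))⁻¹ := by
  obtain ⟨hlen2, hhead, hlast, hint, hch⟩ := hexc
  have hzA : z ∉ A := hz.1
  have hwA : w ∉ A := hw.1
  have hk1 : 1 ≤ k := by omega
  have hη_eq : η = z :: η.tail := List.eq_cons_of_mem_head? hhead
  have hlen_t : η.tail.length = k := by
    rw [List.length_tail, hk]; omega
  have htne : η.tail ≠ [] := by
    intro e; rw [e] at hlen_t; simp at hlen_t; omega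
  have hlast_t : η.tail.getLast? = some w := by
    have h5 := hlast
    rwa [hη_eq, getLast?_cons_ne htne] at h5
  have hnd_t : η.tail.Nodup := by
    rw [hη_eq] at hsa
    exact (List.nodup_cons.1 hsa).2
  have hzt : z ∉ η.tail := by
    rw [hη_eq] at hsa
    exact (List.nodup_cons.1 hsa).1
  have hkey := key η.tail A w hlast_t hnd_t hch.tail hint hwA htne
  have hadj : ∀ y ∈ η.tail.head?, Adj z y := by
    have h5 := hch
    rw [hη_eq] at h5
    exact (List.isChain_cons.1 h5).1
  -- the bijection ys ↦ z :: ys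
  have hg : ∀ ys : List Pt, (TailWalk A w ys ∧ IsLE ys η.tail) →
      IsExcursion A z w (z :: ys) ∧ IsLE (z :: ys) η := by
    rintro ys ⟨⟨hyne, hyl, hyB, hyc⟩, hyle⟩
    have hylen := List.length_pos_iff.2 hyne
    have hzys : z ∉ ys := by
      intro hx
      have hsplit := List.dropLast_append_getLast? w hyl
      rw [← hsplit] at hx
      rcases List.mem_append.1 hx with h | h
      · exact hzA (hyB z h)
      · simp at h; exact hzw h
    refine ⟨⟨by simp; omega, rfl, by rw [getLast?_cons_ne hyne]; exact hyl,
      by simpa using hyB, ?_⟩, ?_⟩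
    · refine List.isChain_cons.2 ⟨?_, hyc⟩
      intro y hy
      rw [isLE_head_eq hyle] at hy
      exact hadj y hy
    · rw [hη_eq]
      exact IsLE.cons z [z] ys η.tail rfl rfl hzys hyle
  let g : {l : List Pt // TailWalk A w l ∧ IsLE l η.tail} →
      {ω : List Pt // IsExcursion A z w ω ∧ IsLE ω η} :=
    fun ysp => ⟨z :: ysp.val, hg ysp.val ysp.2⟩
  have hinj : Function.Injective g := by
    rintro ⟨y1, hy1⟩ ⟨y2, hy2⟩ heq
    have : z :: y1 = z :: y2 := congrArg Subtype.val heq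
    simpa [Subtype.mk.injEq] using this
  have hsurj : Function.Surjective g := by
    rintro ⟨ω, hexc', hle⟩
    rw [hη_eq] at hle
    cases hle with
    | cons x' pre ys η'' h1 h2 h3 h4 =>
      have hyne : ys ≠ [] := isLE_ne_nil h4 htne
      have hpre : pre = z :: pre.tail := List.eq_cons_of_mem_head? h1
      have hpt : pre.tail = [] := by
        by_contra hptne
        have h5 := h2
        rw [hpre, getLast?_cons_ne hptne] at h5
        have hz1 : z ∈ pre.tail := mem_of_getLast?' h5
        have : z ∈ (pre ++ ys).tail.dropLast := by
          rw [hpre, List.cons_append, List.tail_cons,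
            List.dropLast_append_of_ne_nil hyne]
          exact List.mem_append_left _ hz1
        exact hzA (hexc'.2.2.2.1 z this)
      have hpre1 : pre = [z] := by rw [hpre, hpt]
      refine ⟨⟨ys, ⟨⟨hyne, ?_, ?_, ?_⟩, h4⟩⟩, ?_⟩
      · have h5 := hexc'.2.2.1
        rwa [List.getLast?_append_of_ne_nil _ hyne] at h5
      · intro p hp
        refine hexc'.2.2.2.1 p ?_
        rw [hpre1, List.singleton_append, List.tail_cons]
        exact hp
      · have := hexc'.2.2.2.2
        exact this.suffix ⟨pre, rfl⟩
      · apply Subtype.ext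
        show z :: ys = pre ++ ys
        rw [hpre1, List.singleton_append]
  have hbij : Function.Bijective g := ⟨hinj, hsurj⟩
  have hstep : (∑' ω : {ω : List Pt // IsExcursion A z w ω ∧ IsLE ω η}, pathWeight ω.val)
      = 4⁻¹ * G A η.tail := by
    calc (∑' ω : {ω : List Pt // IsExcursion A z w ω ∧ IsLE ω η}, pathWeight ω.val)
        = ∑' ysp, pathWeight ((Equiv.ofBijective g hbij) ysp).val :=
          ((Equiv.ofBijective g hbij).tsum_eq _).symm
      _ = ∑' ysp : {l : List Pt // TailWalk A w l ∧ IsLE l η.tail},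
            4⁻¹ * pathWeight ysp.val := by
          refine tsum_congr ?_
          rintro ⟨y1, hy1⟩
          exact pathWeight_cons hy1.1.1
      _ = 4⁻¹ * G A η.tail := by rw [ENNReal.tsum_mul_left, hkey]
  rw [hstep, G_eq z η.tail A, hlen_t]
  rw [Finset.prod_Ico_eq_prod_range]
  have hterm : ∀ j, (escProb (A \ {p | p ∈ η.tail.take (1 + j - 1)}) (η.getD (1 + j) z))⁻¹
      = (escProb (A \ {p | p ∈ η.tail.take j}) (η.tail.getD j z))⁻¹ := by
    intro j
    have h1 : 1 + j - 1 = j := by omega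
    have h2 : η.getD (1 + j) z = η.tail.getD j z := by
      conv_lhs => rw [hη_eq]
      rw [Nat.add_comm, List.getD_cons_succ]
    rw [h1, h2]
  rw [Finset.prod_congr rfl (fun j _ => hterm j)]
  have hpow : (4 : ℝ≥0∞)⁻¹ ^ k = 4⁻¹ ^ (k - 1) * 4⁻¹ := by
    conv_lhs => rw [show k = (k - 1) + 1 from by omega]
    rw [pow_succ]
  rw [hpow]
  ring
end
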